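/- arXiv:1105.1642 — 4 statements merged into one kernel-verified Lean document; each statement's English description precedes it below -/
import Mathlib

section
/- Let (E_i)_{i∈I} be topological vector spaces over 𝕂 with locally convex (not necessarily Hausdorff) topologies and v_i : E_i → F arbitrary mappings into a 𝕂-vector space F. Then there exists a finest locally convex topology 𝒯_f on F such that every v_i is bounded with respect to the von Neumann bornologies, and (F, 𝒯_f) is bornological: every linear mapping from (F, 𝒯_f) into any locally convex space which is bounded is already continuous. -/
/-!
STATEMENT 4: for arbitrary maps `v i : E i → F` from topological vector spaces with
locally convex topologies into a vector space `F`, there is a finest locally convex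
topology on `F` making all `v i` bounded (w.r.t. von Neumann bornologies), and this
topology is bornological.
-/

open Set

def RCConvex (𝕜 : Type*) [RCLike 𝕜] {E : Type*} [AddCommGroup E] [Module 𝕜 E]
    (s : Set E) : Prop :=
  ∀ ⦃x⦄, x ∈ s → ∀ ⦃y⦄, y ∈ s → ∀ t : ℝ, 0 ≤ t → t ≤ 1 →
    ((t : 𝕜) • x + (((1 - t : ℝ) : 𝕜)) • y) ∈ s

def IsLinearTop (𝕜 : Type*) [RCLike 𝕜] (E : Type*) [AddCommGroup E] [Module 𝕜 E]
    (τ : TopologicalSpace E) : Prop :=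
  @IsTopologicalAddGroup E τ _ ∧ @ContinuousSMul 𝕜 E _ _ τ

def IsLCTop (𝕜 : Type*) [RCLike 𝕜] (E : Type*) [AddCommGroup E] [Module 𝕜 E]
    (τ : TopologicalSpace E) : Prop :=
  IsLinearTop 𝕜 E τ ∧ ∀ U ∈ @nhds E τ 0, ∃ V ∈ @nhds E τ 0, V ⊆ U ∧ RCConvex 𝕜 V

/-- von Neumann boundedness for an explicitly given topology. -/
def VNBdd (𝕜 : Type*) [RCLike 𝕜] {E : Type*} [AddCommGroup E] [Module 𝕜 E]
    (τ : TopologicalSpace E) (s : Set E) : Prop :=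
  ∀ V ∈ @nhds E τ 0, Absorbs 𝕜 V s

/-- `f` maps von Neumann bounded sets to von Neumann bounded sets. -/
def BddMap (𝕜 : Type*) [RCLike 𝕜] {E F : Type*} [AddCommGroup E] [Module 𝕜 E]
    [AddCommGroup F] [Module 𝕜 F]
    (τE : TopologicalSpace E) (τF : TopologicalSpace F) (f : E → F) : Prop :=
  ∀ s : Set E, VNBdd 𝕜 τE s → VNBdd 𝕜 τF (f '' s)

section Aux

variable {𝕜 : Type*} [RCLike 𝕜] {E : Type*} [AddCommGroup E] [Module 𝕜 E]

lemma rcConvex_iInter {ι : Sort*} {s : ι → Set E}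
    (h : ∀ i, RCConvex 𝕜 (s i)) : RCConvex 𝕜 (⋂ i, s i) := by
  intro x hx y hy t ht0 ht1
  simp only [mem_iInter] at hx hy ⊢
  exact fun i => h i (hx i) (hy i) t ht0 ht1

lemma rcConvex_univ : RCConvex 𝕜 (univ : Set E) := fun _ _ _ _ _ _ _ => mem_univ _

lemma vnBdd_iff {τ : TopologicalSpace E} {s : Set E} :
    VNBdd 𝕜 τ s ↔ Filter.absorbing 𝕜 s ≤ @nhds E τ 0 := by
  constructor
  · intro h V hV; exact h V hV
  · intro h V hV; exact h hV

/-- `sInf` of locally convex topologies is locally convex. -/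
lemma isLCTop_sInf {S : Set (TopologicalSpace E)}
    (h : ∀ τ ∈ S, IsLCTop 𝕜 E τ) : IsLCTop 𝕜 E (sInf S) := by
  classical
  refine ⟨⟨topologicalAddGroup_sInf fun τ hτ => (h τ hτ).1.1,
      continuousSMul_sInf fun τ hτ => (h τ hτ).1.2⟩, ?_⟩
  intro U hU
  rw [nhds_sInf, ← iInf_subtype''] at hU
  obtain ⟨I, Ifin, V, hVmem, hVuniv, -, hUV⟩ := Filter.mem_iInf'.1 hU
  choose W hWmem hWsub hWconv using fun t : S => (h t t.2).2 (V t) (hVmem t)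
  set W' : S → Set E := fun t => if t ∈ I then W t else univ with hW'
  refine ⟨⋂ t, W' t, ?_, ?_, ?_⟩
  · rw [nhds_sInf, ← iInf_subtype'']
    refine Filter.mem_iInf_of_iInter Ifin (V := fun t : I => W' t) (fun t => ?_) ?_
    · simp only [W', if_pos t.2]; exact hWmem t
    · intro x hx
      simp only [mem_iInter] at hx ⊢
      intro t
      by_cases ht : t ∈ I
      · exact hx ⟨t, ht⟩
      · simp [hW', ht]
  · intro x hx
    rw [hUV]
    simp only [mem_iInter] at hx ⊢
    intro t
    by_cases ht : t ∈ I
    · have := hx t; simp only [W', if_pos ht] at this; exact hWsub t this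
    · rw [hVuniv t ht]; exact mem_univ _
  · refine rcConvex_iInter fun t => ?_
    by_cases ht : t ∈ I
    · simp only [W', if_pos ht]; exact hWconv t
    · simp only [W', if_neg ht]; exact rcConvex_univ

lemma isLCTop_induced {G : Type*} [AddCommGroup G] [Module 𝕜 G]
    (τG : TopologicalSpace G) (hG : IsLCTop 𝕜 G τG) (T : E →ₗ[𝕜] G) :
    IsLCTop 𝕜 E (τG.induced T) := by
  letI := τG
  haveI : IsTopologicalAddGroup G := hG.1.1
  haveI : ContinuousSMul 𝕜 G := hG.1.2
  refine ⟨⟨topologicalAddGroup_induced T, continuousSMul_induced T⟩, ?_⟩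
  intro U hU
  rw [nhds_induced, map_zero] at hU
  obtain ⟨V, hV, hVU⟩ := hU
  obtain ⟨W, hW, hWV, hWc⟩ := hG.2 V hV
  refine ⟨T ⁻¹' W, ?_, fun x hx => hVU (hWV hx), ?_⟩
  · rw [nhds_induced, map_zero]; exact ⟨W, hW, subset_rfl⟩
  · intro x hx y hy t ht0 ht1
    simp only [mem_preimage, map_add, map_smul] at *
    exact hWc hx hy t ht0 ht1

lemma absorbs_preimage {G : Type*} [AddCommGroup G] [Module 𝕜 G]
    (T : E →ₗ[𝕜] G) {W : Set G} {s : Set E} (h : Absorbs 𝕜 W (T '' s)) :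
    Absorbs 𝕜 (T ⁻¹' W) s := by
  filter_upwards [h, Bornology.eventually_ne_cobounded (0 : 𝕜)] with a ha ha0
  intro x hx
  obtain ⟨w, hw, hxw⟩ := ha (mem_image_of_mem T hx)
  refine ⟨a⁻¹ • x, ?_, by show a • (a⁻¹ • x) = x; rw [smul_smul, mul_inv_cancel₀ ha0, one_smul]⟩
  have : T (a⁻¹ • x) = w := by
    rw [map_smul, ← hxw, smul_smul, inv_mul_cancel₀ ha0, one_smul]
  simpa [mem_preimage, this] using hw

end Aux

universe uG

theorem statement4 {𝕜 : Type*} [RCLike 𝕜] {I : Type*} (F : Type*)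
    [AddCommGroup F] [Module 𝕜 F]
    (Ei : I → Type*) [∀ i, AddCommGroup (Ei i)] [∀ i, Module 𝕜 (Ei i)]
    (τi : ∀ i, TopologicalSpace (Ei i)) (hτi : ∀ i, IsLCTop 𝕜 (Ei i) (τi i))
    (v : ∀ i, Ei i → F) :
    ∃ τf : TopologicalSpace F,
      IsLCTop 𝕜 F τf ∧
      (∀ i, BddMap 𝕜 (τi i) τf (v i)) ∧
      (∀ τ : TopologicalSpace F, IsLCTop 𝕜 F τ →
        (∀ i, BddMap 𝕜 (τi i) τ (v i)) → τf ≤ τ) ∧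
      -- `(F, τf)` is bornological
      (∀ (G : Type uG) (_ : AddCommGroup G), ∀ (_ : Module 𝕜 G),
        ∀ (τG : TopologicalSpace G), IsLCTop 𝕜 G τG →
        ∀ T : F →ₗ[𝕜] G, BddMap 𝕜 τf τG T → @Continuous F G τf τG T) := by
  classical
  set S : Set (TopologicalSpace F) :=
    {τ | IsLCTop 𝕜 F τ ∧ ∀ i, BddMap 𝕜 (τi i) τ (v i)} with hS
  refine ⟨sInf S, isLCTop_sInf fun τ hτ => hτ.1, ?_, ?_, ?_⟩
  · -- each v i bounded w.r.t. sInf S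
    intro i s hs
    rw [vnBdd_iff, nhds_sInf]
    exact le_iInf₂ fun τ hτ => vnBdd_iff.1 (hτ.2 i s hs)
  · exact fun τ h1 h2 => sInf_le ⟨h1, h2⟩
  · -- bornological
    intro G _ _ τG hG T hT
    set σ : TopologicalSpace F := τG.induced T with hσ
    have hbdd_inf : ∀ i, BddMap 𝕜 (τi i) (sInf S ⊓ σ) (v i) := by
      intro i s hs
      have h1 : VNBdd 𝕜 (sInf S) ((v i) '' s) := by
        rw [vnBdd_iff, @nhds_sInf F S 0]
        exact le_iInf₂ fun τ hτ => vnBdd_iff.1 (hτ.2 i s hs)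
      have h2 : VNBdd 𝕜 σ ((v i) '' s) := by
        intro V hV
        rw [hσ, nhds_induced, map_zero] at hV
        obtain ⟨W, hW, hWV⟩ := hV
        have := hT _ h1 W hW
        exact (absorbs_preimage T this).mono_left hWV
      rw [vnBdd_iff, @nhds_inf F (sInf S) σ 0]
      exact le_inf (vnBdd_iff.1 h1) (vnBdd_iff.1 h2)
    have hLC_inf : IsLCTop 𝕜 F (sInf S ⊓ σ) := by
      rw [← sInf_pair]
      refine isLCTop_sInf fun τ hτ => ?_
      rcases hτ with rfl | h
      · exact isLCTop_sInf fun τ hτ => hτ.1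
      · rw [mem_singleton_iff] at h
        subst h
        exact isLCTop_induced τG hG T
    have hle : sInf S ≤ sInf S ⊓ σ := sInf_le ⟨hLC_inf, hbdd_inf⟩
    have : sInf S ≤ σ := hle.trans inf_le_right
    rw [continuous_iff_le_induced]
    exact this
end

section
/- Let A be a bounded algebra over 𝕂, M a bounded right A-module, N a bounded left A-module, and E a locally convex space. (i) For every bounded 𝕂-linear mapping g : M ⊗_A^β N → E, the mapping f := g ∘ ⊗_A^β is bounded, 𝕂-bilinear and A-balanced. (ii) Conversely, for every bounded A-balanced 𝕂-bilinear mapping f : M × N → E there exists a unique bounded 𝕂-linear mapping g : M ⊗_A^β N → E with f = g ∘ ⊗_A^β. These correspondences give bornological isomorphisms L^b(M ⊗_A^β N, E) ≅ L^{A,b}(M, N; E) ≅ L^b_A(M, L^b(N, E)) ≅ L^b_A(N, L^b(M, E)), where all spaces carry the topology of uniform convergence on bounded sets. -/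
/-!
STATEMENT 7: universal property of the bornological tensor product `M ⊗_A^β N` of
bounded modules over a bounded algebra `A`, and the bornological isomorphisms
`L^b(M ⊗_A^β N, E) ≅ L^{A,b}(M,N;E) ≅ L^b_A(M, L^b(N,E)) ≅ L^b_A(N, L^b(M,E))`,
where all spaces carry the bornology of the topology of uniform convergence on
bounded sets (a set of maps is bounded there iff it is equibounded).
-/

open MulOpposite Set
open scoped TensorProduct Pointwise

/-- A family `S` of maps is (equi-)bounded: this is exactly von Neumann boundedness
of `S` in the topology of uniform convergence on bounded sets. -/
def FamBdd (𝕜 : Type*) [RCLike 𝕜] {E F : Type*} [AddCommGroup E] [Module 𝕜 E]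
    [AddCommGroup F] [Module 𝕜 F]
    (τE : TopologicalSpace E) (τF : TopologicalSpace F) (S : Set (E → F)) : Prop :=
  ∀ s : Set E, VNBdd 𝕜 τE s → VNBdd 𝕜 τF (⋃ f ∈ S, f '' s)

/-- `𝕜`-bilinearity of a map on a product. -/
def IsBilinMap (𝕜 : Type*) [RCLike 𝕜] {M N E : Type*} [AddCommGroup M] [Module 𝕜 M]
    [AddCommGroup N] [Module 𝕜 N] [AddCommGroup E] [Module 𝕜 E]
    (f : M × N → E) : Prop :=
  (∀ m m' n, f (m + m', n) = f (m, n) + f (m', n)) ∧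
  (∀ (c : 𝕜) m n, f (c • m, n) = c • f (m, n)) ∧
  (∀ m n n', f (m, n + n') = f (m, n) + f (m, n')) ∧
  (∀ (c : 𝕜) m n, f (m, c • n) = c • f (m, n))

/-- `f` is `A`-balanced: `f (m·a, n) = f (m, a·n)`; the right `A`-module structure
on `M` is given by a `Aᵐᵒᵖ`-module structure. -/
def IsBalancedMap (A : Type*) [Ring A] {M N E : Type*} [AddCommGroup M]
    [Module Aᵐᵒᵖ M] [AddCommGroup N] [Module A N] (f : M × N → E) : Prop :=
  ∀ (a : A) (m : M) (n : N), f (op a • m, n) = f (m, a • n)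

/-- `τ` is the projective tensor product topology on `M ⊗[𝕜] N`: the finest locally
convex topology making the canonical bilinear map continuous. -/
def IsProjTensorTop (𝕜 : Type*) [RCLike 𝕜] {M N : Type*} [AddCommGroup M] [Module 𝕜 M]
    [AddCommGroup N] [Module 𝕜 N] (τM : TopologicalSpace M) (τN : TopologicalSpace N)
    (τ : TopologicalSpace (TensorProduct 𝕜 M N)) : Prop :=
  IsLCTop 𝕜 (TensorProduct 𝕜 M N) τ ∧
  @Continuous (M × N) (TensorProduct 𝕜 M N) (@instTopologicalSpaceProd M N τM τN) τ
    (fun p => p.1 ⊗ₜ[𝕜] p.2) ∧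
  ∀ τ' : TopologicalSpace (TensorProduct 𝕜 M N), IsLCTop 𝕜 (TensorProduct 𝕜 M N) τ' →
    @Continuous (M × N) (TensorProduct 𝕜 M N) (@instTopologicalSpaceProd M N τM τN) τ'
      (fun p => p.1 ⊗ₜ[𝕜] p.2) → τ ≤ τ'

/-- `τ` is the bornological tensor product topology on `M ⊗[𝕜] N`: the finest locally
convex topology making the canonical bilinear map bounded. -/
def IsBetaTensorTop (𝕜 : Type*) [RCLike 𝕜] {M N : Type*} [AddCommGroup M] [Module 𝕜 M]
    [AddCommGroup N] [Module 𝕜 N] (τM : TopologicalSpace M) (τN : TopologicalSpace N)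
    (τ : TopologicalSpace (TensorProduct 𝕜 M N)) : Prop :=
  IsLCTop 𝕜 (TensorProduct 𝕜 M N) τ ∧
  BddMap 𝕜 (@instTopologicalSpaceProd M N τM τN) τ (fun p : M × N => p.1 ⊗ₜ[𝕜] p.2) ∧
  ∀ τ' : TopologicalSpace (TensorProduct 𝕜 M N), IsLCTop 𝕜 (TensorProduct 𝕜 M N) τ' →
    BddMap 𝕜 (@instTopologicalSpaceProd M N τM τN) τ' (fun p : M × N => p.1 ⊗ₜ[𝕜] p.2) →
      τ ≤ τ'

/-- The subspace `J₀` of `M ⊗[𝕜] N` spanned by the elements `m·a ⊗ n - m ⊗ a·n`. -/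
def balancedRel (𝕜 A : Type*) [RCLike 𝕜] [Ring A] [Algebra 𝕜 A] (M N : Type*)
    [AddCommGroup M] [Module 𝕜 M] [Module Aᵐᵒᵖ M]
    [AddCommGroup N] [Module 𝕜 N] [Module A N] :
    Submodule 𝕜 (TensorProduct 𝕜 M N) :=
  Submodule.span 𝕜
    {x | ∃ (a : A) (m : M) (n : N), x = (op a • m) ⊗ₜ[𝕜] n - m ⊗ₜ[𝕜] (a • n)}

/-- The subspace `J₀` for modules over a commutative algebra `A`. -/
def balancedRelComm (𝕜 A : Type*) [RCLike 𝕜] [CommRing A] [Algebra 𝕜 A] (M N : Type*)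
    [AddCommGroup M] [Module 𝕜 M] [Module A M]
    [AddCommGroup N] [Module 𝕜 N] [Module A N] :
    Submodule 𝕜 (TensorProduct 𝕜 M N) :=
  Submodule.span 𝕜
    {x | ∃ (a : A) (m : M) (n : N), x = (a • m) ⊗ₜ[𝕜] n - m ⊗ₜ[𝕜] (a • n)}

/-- Boundedness of a family in `L^b_A(M, L^b(N, E))`: a set of curried maps is
bounded iff it maps each bounded set of `M` to an equibounded family `N → E`. -/
def CurFamBdd (𝕜 : Type*) [RCLike 𝕜] {M N E : Type*} [AddCommGroup M] [Module 𝕜 M]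
    [AddCommGroup N] [Module 𝕜 N] [AddCommGroup E] [Module 𝕜 E]
    (τM : TopologicalSpace M) (τN : TopologicalSpace N) (τE : TopologicalSpace E)
    (S : Set (M → N → E)) : Prop :=
  ∀ B : Set M, VNBdd 𝕜 τM B → FamBdd 𝕜 τN τE (⋃ h ∈ S, h '' B)

/-- `h : M → L^b(N, E)` is a bounded right-`A`-linear map into the space of bounded
linear maps `N → E` (with its right `A`-module structure `(T·a)(n) = T(a·n)`). -/
def IsCurriedBddHom (𝕜 : Type*) [RCLike 𝕜] (A : Type*) [Ring A] {M N E : Type*}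
    [AddCommGroup M] [Module 𝕜 M] [Module Aᵐᵒᵖ M]
    [AddCommGroup N] [Module 𝕜 N] [Module A N] [AddCommGroup E] [Module 𝕜 E]
    (τM : TopologicalSpace M) (τN : TopologicalSpace N) (τE : TopologicalSpace E)
    (h : M → N → E) : Prop :=
  (∀ m m', h (m + m') = h m + h m') ∧
  (∀ (c : 𝕜) m, h (c • m) = c • h m) ∧
  (∀ (a : A) m, h (op a • m) = fun n => h m (a • n)) ∧
  (∀ m n n', h m (n + n') = h m n + h m n') ∧
  (∀ m (c : 𝕜) n, h m (c • n) = c • h m n) ∧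
  (∀ m, BddMap 𝕜 τN τE (h m)) ∧
  (∀ B : Set M, VNBdd 𝕜 τM B → FamBdd 𝕜 τN τE (h '' B))

/-- `k : N → L^b(M, E)` is a bounded left-`A`-linear map into the space of bounded
linear maps `M → E` (with `(a·T)(m) = T(m·a)`). -/
def IsCurriedBddHom' (𝕜 : Type*) [RCLike 𝕜] (A : Type*) [Ring A] {M N E : Type*}
    [AddCommGroup M] [Module 𝕜 M] [Module Aᵐᵒᵖ M]
    [AddCommGroup N] [Module 𝕜 N] [Module A N] [AddCommGroup E] [Module 𝕜 E]
    (τM : TopologicalSpace M) (τN : TopologicalSpace N) (τE : TopologicalSpace E)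
    (k : N → M → E) : Prop :=
  (∀ n n', k (n + n') = k n + k n') ∧
  (∀ (c : 𝕜) n, k (c • n) = c • k n) ∧
  (∀ (a : A) n, k (a • n) = fun m => k n (op a • m)) ∧
  (∀ n m m', k n (m + m') = k n m + k n m') ∧
  (∀ n (c : 𝕜) m, k n (c • m) = c • k n m) ∧
  (∀ n, BddMap 𝕜 τM τE (k n)) ∧
  (∀ B : Set N, VNBdd 𝕜 τN B → FamBdd 𝕜 τM τE (k '' B))

section Aux
variable {𝕜 : Type*} [RCLike 𝕜] {E F G : Type*}
  [AddCommGroup E] [Module 𝕜 E] [AddCommGroup F] [Module 𝕜 F] [AddCommGroup G] [Module 𝕜 G]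

lemma vnbdd_mono (τ : TopologicalSpace E) {s t : Set E} (h : VNBdd 𝕜 τ s) (hts : t ⊆ s) :
    VNBdd 𝕜 τ t := fun V hV => (h V hV).mono subset_rfl hts

lemma vnbdd_singleton (τ : TopologicalSpace E) (hsm : @ContinuousSMul 𝕜 E _ _ τ) (x : E) :
    VNBdd 𝕜 τ {x} := by
  letI := τ; haveI := hsm
  intro V hV
  exact (absorbent_nhds_zero hV).absorbs

lemma vnbdd_add (τ : TopologicalSpace E) (hg : @IsTopologicalAddGroup E τ _) {s t : Set E}
    (hs : VNBdd 𝕜 τ s) (ht : VNBdd 𝕜 τ t) : VNBdd 𝕜 τ (s + t) := by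
  letI := τ; haveI := hg
  intro V hV
  obtain ⟨V', hV', hh⟩ := exists_nhds_zero_half hV
  have hsub : V' + V' ⊆ V := by
    rintro _ ⟨a, ha, b, hb, rfl⟩
    exact hh a ha b hb
  exact ((hs V' hV').add (ht V' hV')).mono hsub subset_rfl

lemma bddMap_of_nhds (τE : TopologicalSpace E) (τF : TopologicalSpace F) {f : E → F}
    (hsm : ∀ (c : 𝕜) x, f (c • x) = c • f x)
    (hc : ∀ W ∈ @nhds F τF 0, f ⁻¹' W ∈ @nhds E τE 0) : BddMap 𝕜 τE τF f := by
  intro s hs W hW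
  rw [absorbs_iff_norm]
  obtain ⟨r, hr⟩ := absorbs_iff_norm.1 (hs _ (hc W hW))
  refine ⟨max r 1, fun c hc' => ?_⟩
  rintro _ ⟨x, hx, rfl⟩
  obtain ⟨v, hv, rfl⟩ := Set.mem_smul_set.1 (hr c (le_trans (le_max_left _ _) hc') hx)
  exact Set.mem_smul_set.2 ⟨f v, hv, (hsm c v).symm⟩

lemma bddMap_of_continuous (τE : TopologicalSpace E) (τF : TopologicalSpace F) {f : E → F}
    (hsm : ∀ (c : 𝕜) x, f (c • x) = c • f x) (hf0 : f 0 = 0)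
    (hc : @Continuous E F τE τF f) : BddMap 𝕜 τE τF f := by
  refine bddMap_of_nhds τE τF hsm fun W hW => ?_
  have := @Continuous.tendsto _ _ τE τF _ hc 0
  rw [hf0] at this
  exact this hW

lemma vnbdd_prod (τE : TopologicalSpace E) (τF : TopologicalSpace F) {B : Set E} {C : Set F}
    (hB : VNBdd 𝕜 τE B) (hC : VNBdd 𝕜 τF C) :
    VNBdd 𝕜 (@instTopologicalSpaceProd E F τE τF) (B ×ˢ C) := by
  letI := τE; letI := τF
  intro V hV
  obtain ⟨u, hu, v, hv, huv⟩ := mem_nhds_prod_iff.1 (show V ∈ nhds ((0 : E), (0 : F)) from hV)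
  rw [absorbs_iff_norm]
  obtain ⟨r₁, hr₁⟩ := absorbs_iff_norm.1 (hB u hu)
  obtain ⟨r₂, hr₂⟩ := absorbs_iff_norm.1 (hC v hv)
  refine ⟨max r₁ r₂, fun c hc => ?_⟩
  rintro ⟨x, y⟩ ⟨hx, hy⟩
  obtain ⟨a, ha, rfl⟩ := Set.mem_smul_set.1 (hr₁ c (le_trans (le_max_left _ _) hc) hx)
  obtain ⟨b, hb, rfl⟩ := Set.mem_smul_set.1 (hr₂ c (le_trans (le_max_right _ _) hc) hy)
  exact Set.mem_smul_set.2 ⟨(a, b), huv ⟨ha, hb⟩, rfl⟩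

lemma rcconvex_preimage (h : F →ₗ[𝕜] E) {W : Set E} (hW : RCConvex 𝕜 W) :
    RCConvex 𝕜 (⇑h ⁻¹' W) := fun x hx y hy t ht0 ht1 => by
  simp only [Set.mem_preimage, map_add, map_smul]
  exact hW hx hy t ht0 ht1

lemma rcconvex_iInter {ι : Sort*} {W : ι → Set E} (hW : ∀ i, RCConvex 𝕜 (W i)) :
    RCConvex 𝕜 (⋂ i, W i) := fun x hx y hy t ht0 ht1 =>
  Set.mem_iInter.2 fun i => hW i (Set.mem_iInter.1 hx i) (Set.mem_iInter.1 hy i) t ht0 ht1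

lemma rcconvex_univ : RCConvex 𝕜 (Set.univ : Set E) := fun _ _ _ _ _ _ _ => trivial

end Aux

section Key

variable {𝕜 : Type*} [RCLike 𝕜]
  {M : Type*} [AddCommGroup M] [Module 𝕜 M] [TopologicalSpace M]
  {N : Type*} [AddCommGroup N] [Module 𝕜 N] [TopologicalSpace N]
  {E : Type*} [AddCommGroup E] [Module 𝕜 E] [TopologicalSpace E]

lemma key_lemma
    (hMsm : ContinuousSMul 𝕜 M) (hNsm : ContinuousSMul 𝕜 N)
    (hE : IsLCTop 𝕜 E inferInstance)
    (τT : TopologicalSpace (TensorProduct 𝕜 M N))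
    (hτT : IsBetaTensorTop 𝕜 inferInstance inferInstance τT)
    {ι : Type*} (h : ι → (TensorProduct 𝕜 M N →ₗ[𝕜] E))
    (hb : ∀ s : Set (M × N), VNBdd 𝕜 inferInstance s →
      VNBdd 𝕜 inferInstance (⋃ i, ⇑(h i) '' ((fun p : M × N => p.1 ⊗ₜ[𝕜] p.2) '' s)))
    {W : Set E} (hW : W ∈ nhds (0 : E)) (hWc : RCConvex 𝕜 W) :
    (⋂ i, ⇑(h i) ⁻¹' W) ∈ @nhds _ τT 0 := by
  haveI hEgrp : IsTopologicalAddGroup E := hE.1.1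
  haveI hEsm : ContinuousSMul 𝕜 E := hE.1.2
  haveI := hMsm; haveI := hNsm
  -- pointwise boundedness of orbits
  have horb : ∀ x : TensorProduct 𝕜 M N,
      VNBdd 𝕜 (inferInstance : TopologicalSpace E) (Set.range fun i => h i x) := by
    intro x
    induction x using TensorProduct.induction_on with
    | zero =>
      refine vnbdd_mono _ (vnbdd_singleton _ hEsm (0 : E)) ?_
      rintro _ ⟨i, rfl⟩; simp
    | tmul m n =>
      refine vnbdd_mono _ (hb {(m, n)} (vnbdd_singleton _ inferInstance _)) ?_
      rintro _ ⟨i, rfl⟩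
      exact Set.mem_iUnion.2 ⟨i, ⟨m ⊗ₜ[𝕜] n, ⟨(m, n), rfl, rfl⟩, rfl⟩⟩
    | add x y hx hy =>
      refine vnbdd_mono _ (vnbdd_add _ hEgrp hx hy) ?_
      rintro _ ⟨i, rfl⟩
      exact ⟨h i x, ⟨i, rfl⟩, h i y, ⟨i, rfl⟩, (map_add (h i) x y).symm⟩
  -- the filter basis
  set pre : Set E → Set (TensorProduct 𝕜 M N) := fun W' => ⋂ i, ⇑(h i) ⁻¹' W' with hpre
  have hconv : ∀ U ∈ nhds (0 : E), ∃ W' ∈ nhds (0 : E), W' ⊆ U ∧ RCConvex 𝕜 W' := hE.2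
  have hmono : ∀ {W₁ W₂ : Set E}, W₁ ⊆ W₂ → pre W₁ ⊆ pre W₂ := fun hW x hx =>
    Set.mem_iInter.2 fun i => hW (Set.mem_iInter.1 hx i)
  let B : ModuleFilterBasis 𝕜 (TensorProduct 𝕜 M N) :=
    { sets := {V | ∃ W', W' ∈ nhds (0 : E) ∧ RCConvex 𝕜 W' ∧ V = pre W'}
      nonempty := ⟨pre Set.univ, Set.univ, Filter.univ_mem, rcconvex_univ, rfl⟩
      inter_sets := by
        rintro _ _ ⟨W₁, hW₁, hc₁, rfl⟩ ⟨W₂, hW₂, hc₂, rfl⟩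
        obtain ⟨W', hW', hsub, hc'⟩ := hconv (W₁ ∩ W₂) (Filter.inter_mem hW₁ hW₂)
        exact ⟨pre W', ⟨W', hW', hc', rfl⟩,
          Set.subset_inter (hmono (fun x hx => (hsub hx).1)) (hmono fun x hx => (hsub hx).2)⟩
      zero' := by
        rintro _ ⟨W', hW', _, rfl⟩
        exact Set.mem_iInter.2 fun i => by
          simp only [Set.mem_preimage, map_zero]; exact mem_of_mem_nhds hW'
      add' := by
        rintro _ ⟨W', hW', _, rfl⟩
        obtain ⟨V', hV', hhalf⟩ := exists_nhds_zero_half hW'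
        obtain ⟨W'', hW'', hsub, hc''⟩ := hconv V' hV'
        refine ⟨pre W'', ⟨W'', hW'', hc'', rfl⟩, ?_⟩
        rintro _ ⟨a, ha, b, hb, rfl⟩
        refine Set.mem_iInter.2 fun i => ?_
        simp only [Set.mem_preimage, map_add]
        exact hhalf _ (hsub (Set.mem_iInter.1 ha i)) _ (hsub (Set.mem_iInter.1 hb i))
      neg' := by
        rintro _ ⟨W', hW', _, rfl⟩
        have hnW : (fun x : E => -x) ⁻¹' W' ∈ nhds (0 : E) := by
          have : Filter.Tendsto (fun x : E => -x) (nhds 0) (nhds 0) := by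
            simpa using (continuous_neg (G := E)).tendsto (0 : E)
          exact this hW'
        obtain ⟨W'', hW'', hsub, hc''⟩ := hconv _ hnW
        refine ⟨pre W'', ⟨W'', hW'', hc'', rfl⟩, fun x hx => Set.mem_iInter.2 fun i => ?_⟩
        simp only [Set.mem_preimage, map_neg]
        exact hsub (Set.mem_iInter.1 hx i)
      conj' := by
        rintro x₀ _ ⟨W', hW', hc', rfl⟩
        refine ⟨pre W', ⟨W', hW', hc', rfl⟩, fun x hx => ?_⟩
        simpa [add_comm, add_assoc] using hx
      smul' := by
        rintro _ ⟨W', hW', _, rfl⟩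
        have hsm0 : Filter.Tendsto (fun p : 𝕜 × E => p.1 • p.2)
            (nhds 0 ×ˢ nhds 0) (nhds (0 : E)) := by
          have := (continuous_smul (M := 𝕜) (X := E)).tendsto ((0 : 𝕜), (0 : E))
          rw [nhds_prod_eq] at this
          simpa using this
        have : (fun p : 𝕜 × E => p.1 • p.2) ⁻¹' W' ∈ nhds (0 : 𝕜) ×ˢ nhds (0 : E) := hsm0 hW'
        obtain ⟨u, hu, v, hv, huv⟩ := Filter.mem_prod_iff.1 this
        obtain ⟨W'', hW'', hsub, hc''⟩ := hconv v hv
        refine ⟨u, hu, pre W'', ⟨W'', hW'', hc'', rfl⟩, ?_⟩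
        rintro _ ⟨c, hc, x, hx, rfl⟩
        refine Set.mem_iInter.2 fun i => ?_
        simp only [Set.mem_preimage, map_smul]
        exact huv (Set.mk_mem_prod hc (hsub (Set.mem_iInter.1 hx i)))
      smul_left' := by
        rintro x₀ _ ⟨W', hW', _, rfl⟩
        have hsm0 : Filter.Tendsto (fun x : E => x₀ • x) (nhds 0) (nhds (0 : E)) := by
          have : Continuous (fun x : E => x₀ • x) := continuous_const.smul continuous_id
          simpa using this.tendsto (0 : E)
        obtain ⟨W'', hW'', hsub, hc''⟩ := hconv _ (hsm0 hW')
        refine ⟨pre W'', ⟨W'', hW'', hc'', rfl⟩, fun x hx => Set.mem_iInter.2 fun i => ?_⟩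
        simp only [Set.mem_preimage, map_smul]
        exact hsub (Set.mem_iInter.1 hx i)
      smul_right' := by
        rintro m₀ _ ⟨W', hW', _, rfl⟩
        have habs : Absorbs 𝕜 W' (Set.range fun i => h i m₀) := horb m₀ W' hW'
        have := (absorbs_iff_eventually_nhds_zero (mem_of_mem_nhds hW')).1 habs
        refine this.mono fun c hc => Set.mem_iInter.2 fun i => ?_
        simp only [Set.mem_preimage, map_smul]
        exact hc ⟨i, rfl⟩ }
  -- the associated topology
  letI τ'' := B.topology
  have hbasis := B.toAddGroupFilterBasis.nhds_zero_hasBasis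
  have hτ''grp : @IsTopologicalAddGroup (TensorProduct 𝕜 M N) τ'' _ :=
    B.toAddGroupFilterBasis.isTopologicalAddGroup
  have hτ''sm : @ContinuousSMul 𝕜 (TensorProduct 𝕜 M N) _ _ τ'' := B.continuousSMul
  have hτ''lc : IsLCTop 𝕜 (TensorProduct 𝕜 M N) τ'' := by
    refine ⟨⟨hτ''grp, hτ''sm⟩, fun U hU => ?_⟩
    obtain ⟨V, hV, hVU⟩ := hbasis.mem_iff.1 hU
    obtain ⟨W', hW', hc', rfl⟩ := hV
    exact ⟨pre W', hbasis.mem_of_mem ⟨W', hW', hc', rfl⟩, hVU,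
      rcconvex_iInter fun i => rcconvex_preimage (h i) hc'⟩
  have hτ''bdd : BddMap 𝕜 (instTopologicalSpaceProd) τ'' (fun p : M × N => p.1 ⊗ₜ[𝕜] p.2) := by
    intro s hs V hV
    obtain ⟨V₀, hV₀, hV₀V⟩ := hbasis.mem_iff.1 hV
    obtain ⟨W', hW', _, rfl⟩ := hV₀
    refine Absorbs.mono ?_ hV₀V subset_rfl
    rw [absorbs_iff_norm]
    obtain ⟨r, hr⟩ := absorbs_iff_norm.1 (hb s hs W' hW')
    refine ⟨max r 1, fun c hc => ?_⟩
    have hc0 : c ≠ 0 := by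
      intro h0
      rw [h0, norm_zero] at hc
      exact absurd (le_trans (le_max_right r 1) hc) (by norm_num)
    rintro _ ⟨p, hp, rfl⟩
    refine Set.mem_smul_set.2 ⟨c⁻¹ • (p.1 ⊗ₜ[𝕜] p.2), Set.mem_iInter.2 fun i => ?_,
      smul_inv_smul₀ hc0 _⟩
    simp only [Set.mem_preimage, map_smul]
    have hmem : h i (p.1 ⊗ₜ[𝕜] p.2) ∈ c • W' := by
      refine hr c (le_trans (le_max_left _ _) hc) ?_
      exact Set.mem_iUnion.2 ⟨i, ⟨p.1 ⊗ₜ[𝕜] p.2, ⟨p, hp, rfl⟩, rfl⟩⟩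
    obtain ⟨w, hw, hwe⟩ := Set.mem_smul_set.1 hmem
    rw [← hwe, inv_smul_smul₀ hc0]
    exact hw
  have hle : τT ≤ τ'' := hτT.2.2 τ'' hτ''lc hτ''bdd
  exact nhds_mono hle (hbasis.mem_of_mem ⟨W, hW, hWc, rfl⟩)

end Key

section Cor

variable {𝕜 : Type*} [RCLike 𝕜]
  {M : Type*} [AddCommGroup M] [Module 𝕜 M] [TopologicalSpace M]
  {N : Type*} [AddCommGroup N] [Module 𝕜 N] [TopologicalSpace N]
  {E : Type*} [AddCommGroup E] [Module 𝕜 E] [TopologicalSpace E]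

/-- A family of linear maps which is equibounded on tensors of bounded sets is
equibounded on all `τT`-bounded sets. -/
lemma key_fam
    (hMsm : ContinuousSMul 𝕜 M) (hNsm : ContinuousSMul 𝕜 N)
    (hE : IsLCTop 𝕜 E inferInstance)
    (τT : TopologicalSpace (TensorProduct 𝕜 M N))
    (hτT : IsBetaTensorTop 𝕜 inferInstance inferInstance τT)
    {ι : Type*} (h : ι → (TensorProduct 𝕜 M N →ₗ[𝕜] E))
    (hb : ∀ s : Set (M × N), VNBdd 𝕜 inferInstance s →
      VNBdd 𝕜 inferInstance (⋃ i, ⇑(h i) '' ((fun p : M × N => p.1 ⊗ₜ[𝕜] p.2) '' s)))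
    {t : Set (TensorProduct 𝕜 M N)} (ht : VNBdd 𝕜 τT t) :
    VNBdd 𝕜 (inferInstance : TopologicalSpace E) (⋃ i, ⇑(h i) '' t) := by
  intro W₀ hW₀
  obtain ⟨W, hW, hWsub, hWc⟩ := hE.2 W₀ hW₀
  have hV := key_lemma hMsm hNsm hE τT hτT h hb hW hWc
  rw [absorbs_iff_norm]
  obtain ⟨r, hr⟩ := absorbs_iff_norm.1 (ht _ hV)
  refine ⟨max r 1, fun c hc => ?_⟩
  have hc0 : c ≠ 0 := by
    intro h0; rw [h0, norm_zero] at hc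
    exact absurd (le_trans (le_max_right r 1) hc) (by norm_num)
  rintro _ hy
  obtain ⟨i, x, hx, rfl⟩ : ∃ i, ∃ x ∈ t, h i x = _ := by
    simpa only [Set.mem_iUnion, Set.mem_image] using hy
  obtain ⟨v, hv, rfl⟩ := Set.mem_smul_set.1 (hr c (le_trans (le_max_left _ _) hc) hx)
  exact Set.mem_smul_set.2 ⟨h i v, hWsub (Set.mem_iInter.1 hv i), (map_smul (h i) c v).symm⟩

/-- A linear map which is bounded on tensors of bounded sets is `τT`-continuous. -/
lemma key_cont
    (hMsm : ContinuousSMul 𝕜 M) (hNsm : ContinuousSMul 𝕜 N)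
    (hE : IsLCTop 𝕜 E inferInstance)
    (τT : TopologicalSpace (TensorProduct 𝕜 M N))
    (hτT : IsBetaTensorTop 𝕜 inferInstance inferInstance τT)
    (h : TensorProduct 𝕜 M N →ₗ[𝕜] E)
    (hb : ∀ s : Set (M × N), VNBdd 𝕜 inferInstance s →
      VNBdd 𝕜 inferInstance (⇑h '' ((fun p : M × N => p.1 ⊗ₜ[𝕜] p.2) '' s))) :
    @Continuous _ _ τT _ ⇑h := by
  letI := τT
  haveI : IsTopologicalAddGroup (TensorProduct 𝕜 M N) := hτT.1.1.1
  haveI : IsTopologicalAddGroup E := hE.1.1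
  refine continuous_of_continuousAt_zero h ?_
  intro U hU
  rw [map_zero] at hU
  obtain ⟨W, hW, hWsub, hWc⟩ := hE.2 U hU
  have hV := key_lemma hMsm hNsm hE τT hτT (fun _ : Unit => h)
    (fun s hs => by rw [Set.iUnion_const]; exact hb s hs) hW hWc
  simp only [Set.iInter_const] at hV
  exact Filter.mem_of_superset hV fun x hx => hWsub hx

end Cor

section Quot

variable {𝕜 : Type*} [RCLike 𝕜] {T : Type*} [AddCommGroup T] [Module 𝕜 T]

lemma quot_mem_nhds (τ : TopologicalSpace T) (hg : @IsTopologicalAddGroup T τ _)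
    (J : Submodule 𝕜 T) {V : Set (T ⧸ J)} (hV : ⇑J.mkQ ⁻¹' V ∈ @nhds T τ 0) :
    V ∈ @nhds _ (τ.coinduced ⇑J.mkQ) 0 := by
  letI := τ; haveI := hg
  letI τQ : TopologicalSpace (T ⧸ J) := τ.coinduced ⇑J.mkQ
  obtain ⟨U, hUV, hUopen, hU0⟩ := mem_nhds_iff.1 hV
  have hpre : ⇑J.mkQ ⁻¹' (⇑J.mkQ '' U) = ⋃ j : J, (fun u => u + (j : T)) '' U := by
    ext x
    simp only [Set.mem_preimage, Set.mem_image, Set.mem_iUnion]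
    constructor
    · rintro ⟨u, hu, he⟩
      have hxu : u - x ∈ J := by
        rw [Submodule.mkQ_apply, Submodule.mkQ_apply, Submodule.Quotient.eq] at he
        exact he
      exact ⟨⟨-(u - x), J.neg_mem hxu⟩, u, hu, by push_cast; abel⟩
    · rintro ⟨j, u, hu, rfl⟩
      refine ⟨u, hu, ?_⟩
      rw [Submodule.mkQ_apply, Submodule.mkQ_apply, Submodule.Quotient.eq]
      simpa using J.neg_mem j.2
  have hopen : IsOpen (⇑J.mkQ '' U) := by
    rw [isOpen_coinduced, hpre]
    exact isOpen_iUnion fun j => (isOpenMap_add_right (j : T)) U hUopen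
  exact mem_nhds_iff.2 ⟨⇑J.mkQ '' U, Set.image_subset_iff.2 hUV, hopen,
    ⟨0, hU0, map_zero _⟩⟩

end Quot
theorem statement7 {𝕜 : Type*} [RCLike 𝕜]
    -- the bounded algebra A
    (A : Type*) [Ring A] [Algebra 𝕜 A] [TopologicalSpace A] [T2Space A]
    (hA : IsLCTop 𝕜 A (inferInstance))
    (hAmul : BddMap 𝕜 (inferInstance : TopologicalSpace (A × A)) (inferInstance)
      (fun p : A × A => p.1 * p.2))
    -- M, a bounded right A-module
    (M : Type*) [AddCommGroup M] [Module 𝕜 M] [Module Aᵐᵒᵖ M] [IsScalarTower 𝕜 Aᵐᵒᵖ M]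
    [TopologicalSpace M] [T2Space M] (hM : IsLCTop 𝕜 M (inferInstance))
    (hMmod : BddMap 𝕜 (inferInstance : TopologicalSpace (A × M)) (inferInstance)
      (fun p : A × M => op p.1 • p.2))
    -- N, a bounded left A-module
    (N : Type*) [AddCommGroup N] [Module 𝕜 N] [Module A N] [IsScalarTower 𝕜 A N]
    [TopologicalSpace N] [T2Space N] (hN : IsLCTop 𝕜 N (inferInstance))
    (hNmod : BddMap 𝕜 (inferInstance : TopologicalSpace (A × N)) (inferInstance)
      (fun p : A × N => p.1 • p.2))
    -- E, a locally convex space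
    (E : Type*) [AddCommGroup E] [Module 𝕜 E] [TopologicalSpace E] [T2Space E]
    (hE : IsLCTop 𝕜 E (inferInstance))
    -- the bornological tensor product topology on M ⊗[𝕜] N
    (τT : TopologicalSpace (TensorProduct 𝕜 M N))
    (hτT : IsBetaTensorTop 𝕜 (inferInstance) (inferInstance) τT)
    -- J = closure of J₀ in M ⊗_β N
    (J : Submodule 𝕜 (TensorProduct 𝕜 M N))
    (hJ : (J : Set (TensorProduct 𝕜 M N)) = @closure _ τT (balancedRel 𝕜 A M N)) :
    ∀ τQ : TopologicalSpace (TensorProduct 𝕜 M N ⧸ J), τQ = τT.coinduced J.mkQ →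
    -- (i)
    ((∀ g : TensorProduct 𝕜 M N ⧸ J →ₗ[𝕜] E,
        BddMap 𝕜 τQ (inferInstance) ⇑g →
        (BddMap 𝕜 (inferInstance : TopologicalSpace (M × N)) (inferInstance)
            (fun p : M × N => g (J.mkQ (p.1 ⊗ₜ[𝕜] p.2))) ∧
         IsBilinMap 𝕜 (fun p : M × N => g (J.mkQ (p.1 ⊗ₜ[𝕜] p.2))) ∧
         IsBalancedMap A (fun p : M × N => g (J.mkQ (p.1 ⊗ₜ[𝕜] p.2))))) ∧
    -- (ii)
     (∀ f : M × N → E,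
        BddMap 𝕜 (inferInstance : TopologicalSpace (M × N)) (inferInstance) f →
        IsBilinMap 𝕜 f → IsBalancedMap A f →
        ∃! g : TensorProduct 𝕜 M N ⧸ J →ₗ[𝕜] E,
          BddMap 𝕜 τQ (inferInstance) ⇑g ∧ ∀ p : M × N, g (J.mkQ (p.1 ⊗ₜ[𝕜] p.2)) = f p) ∧
    -- L^b(M ⊗_A^β N, E) ≅ L^{A,b}(M, N; E), bornologically
     (Set.BijOn (fun (g : TensorProduct 𝕜 M N ⧸ J →ₗ[𝕜] E) =>
          (fun p : M × N => g (J.mkQ (p.1 ⊗ₜ[𝕜] p.2))))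
        {g | BddMap 𝕜 τQ (inferInstance) ⇑g}
        {f | BddMap 𝕜 (inferInstance : TopologicalSpace (M × N)) (inferInstance) f ∧
             IsBilinMap 𝕜 f ∧ IsBalancedMap A f} ∧
      ∀ S : Set (TensorProduct 𝕜 M N ⧸ J →ₗ[𝕜] E),
        S ⊆ {g | BddMap 𝕜 τQ (inferInstance) ⇑g} →
        (FamBdd 𝕜 τQ (inferInstance)
            ((fun g : TensorProduct 𝕜 M N ⧸ J →ₗ[𝕜] E => (g : TensorProduct 𝕜 M N ⧸ J → E)) '' S) ↔
         FamBdd 𝕜 (inferInstance : TopologicalSpace (M × N)) (inferInstance)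
            ((fun (g : TensorProduct 𝕜 M N ⧸ J →ₗ[𝕜] E) =>
              (fun p : M × N => g (J.mkQ (p.1 ⊗ₜ[𝕜] p.2)))) '' S))) ∧
    -- L^{A,b}(M, N; E) ≅ L^b_A(M, L^b(N, E)), bornologically
     (Set.BijOn (fun (f : M × N → E) => Function.curry f)
        {f | BddMap 𝕜 (inferInstance : TopologicalSpace (M × N)) (inferInstance) f ∧
             IsBilinMap 𝕜 f ∧ IsBalancedMap A f}
        {h | IsCurriedBddHom 𝕜 A (inferInstance) (inferInstance) (inferInstance) h} ∧
      ∀ S : Set (M × N → E),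
        S ⊆ {f | BddMap 𝕜 (inferInstance : TopologicalSpace (M × N)) (inferInstance) f ∧
             IsBilinMap 𝕜 f ∧ IsBalancedMap A f} →
        (FamBdd 𝕜 (inferInstance : TopologicalSpace (M × N)) (inferInstance) S ↔
         CurFamBdd 𝕜 (inferInstance) (inferInstance) (inferInstance)
           (Function.curry '' S))) ∧
    -- L^{A,b}(M, N; E) ≅ L^b_A(N, L^b(M, E)), bornologically
     (Set.BijOn (fun (f : M × N → E) => (fun n m => f (m, n)))
        {f | BddMap 𝕜 (inferInstance : TopologicalSpace (M × N)) (inferInstance) f ∧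
             IsBilinMap 𝕜 f ∧ IsBalancedMap A f}
        {k | IsCurriedBddHom' 𝕜 A (inferInstance) (inferInstance) (inferInstance) k} ∧
      ∀ S : Set (M × N → E),
        S ⊆ {f | BddMap 𝕜 (inferInstance : TopologicalSpace (M × N)) (inferInstance) f ∧
             IsBilinMap 𝕜 f ∧ IsBalancedMap A f} →
        (FamBdd 𝕜 (inferInstance : TopologicalSpace (M × N)) (inferInstance) S ↔
         CurFamBdd 𝕜 (inferInstance) (inferInstance) (inferInstance)
           ((fun (f : M × N → E) => (fun n m => f (m, n))) '' S)))) := by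
  haveI hMg : IsTopologicalAddGroup M := hM.1.1
  haveI hMs : ContinuousSMul 𝕜 M := hM.1.2
  haveI hNg : IsTopologicalAddGroup N := hN.1.1
  haveI hNs : ContinuousSMul 𝕜 N := hN.1.2
  haveI hEg : IsTopologicalAddGroup E := hE.1.1
  haveI hEs : ContinuousSMul 𝕜 E := hE.1.2
  intro τQ hτQ
  subst hτQ
  have hTg : @IsTopologicalAddGroup (TensorProduct 𝕜 M N) τT _ := hτT.1.1.1
  have htmb : BddMap 𝕜 (inferInstance : TopologicalSpace (M × N)) τT
      (fun p : M × N => p.1 ⊗ₜ[𝕜] p.2) := hτT.2.1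
  have hπc : @Continuous _ _ τT (τT.coinduced ⇑J.mkQ) ⇑J.mkQ := continuous_coinduced_rng
  have hπb : BddMap 𝕜 τT (τT.coinduced ⇑J.mkQ) ⇑J.mkQ :=
    bddMap_of_continuous τT _ (fun c x => map_smul J.mkQ c x) (map_zero _) hπc
  have hJ₀ : ∀ (a : A) (m : M) (n : N),
      ((op a • m) ⊗ₜ[𝕜] n - m ⊗ₜ[𝕜] (a • n)) ∈ J := by
    intro a m n
    have : ((op a • m) ⊗ₜ[𝕜] n - m ⊗ₜ[𝕜] (a • n)) ∈ (J : Set (TensorProduct 𝕜 M N)) := by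
      rw [hJ]
      exact subset_closure (Submodule.subset_span ⟨a, m, n, rfl⟩)
    exact this
  -- part (i)
  have part1 : ∀ g : TensorProduct 𝕜 M N ⧸ J →ₗ[𝕜] E,
      BddMap 𝕜 (τT.coinduced ⇑J.mkQ) (inferInstance) ⇑g →
      (BddMap 𝕜 (inferInstance : TopologicalSpace (M × N)) (inferInstance)
          (fun p : M × N => g (J.mkQ (p.1 ⊗ₜ[𝕜] p.2))) ∧
       IsBilinMap 𝕜 (fun p : M × N => g (J.mkQ (p.1 ⊗ₜ[𝕜] p.2))) ∧
       IsBalancedMap A (fun p : M × N => g (J.mkQ (p.1 ⊗ₜ[𝕜] p.2)))) := by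
    intro g hg
    refine ⟨?_, ⟨?_, ?_, ?_, ?_⟩, ?_⟩
    · intro s hs
      refine vnbdd_mono _ (hg _ (hπb _ (htmb s hs))) ?_
      rintro _ ⟨p, hp, rfl⟩
      exact ⟨J.mkQ (p.1 ⊗ₜ[𝕜] p.2), ⟨p.1 ⊗ₜ[𝕜] p.2, ⟨p, hp, rfl⟩, rfl⟩, rfl⟩
    · intro m m' n
      simp only [TensorProduct.add_tmul, map_add]
    · intro c m n
      simp only [← TensorProduct.smul_tmul', map_smul]
    · intro m n n'
      simp only [TensorProduct.tmul_add, map_add]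
    · intro c m n
      simp only [TensorProduct.tmul_smul, map_smul]
    · intro a m n
      have heq : J.mkQ ((op a • m) ⊗ₜ[𝕜] n) = J.mkQ (m ⊗ₜ[𝕜] (a • n)) := by
        rw [Submodule.mkQ_apply, Submodule.mkQ_apply, Submodule.Quotient.eq]
        exact hJ₀ a m n
      simp only [heq]
  -- uniqueness helper
  have huniq : ∀ g₁ g₂ : TensorProduct 𝕜 M N ⧸ J →ₗ[𝕜] E,
      (∀ p : M × N, g₁ (J.mkQ (p.1 ⊗ₜ[𝕜] p.2)) = g₂ (J.mkQ (p.1 ⊗ₜ[𝕜] p.2))) → g₁ = g₂ := by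
    intro g₁ g₂ hp
    apply LinearMap.ext
    intro q
    obtain ⟨x, rfl⟩ := J.mkQ_surjective q
    induction x using TensorProduct.induction_on with
    | zero => simp
    | tmul m n => exact hp (m, n)
    | add x y hx hy => rw [map_add, map_add, map_add, hx, hy]
  -- part (ii)
  have part2 : ∀ f : M × N → E,
      BddMap 𝕜 (inferInstance : TopologicalSpace (M × N)) (inferInstance) f →
      IsBilinMap 𝕜 f → IsBalancedMap A f →
      ∃! g : TensorProduct 𝕜 M N ⧸ J →ₗ[𝕜] E,
        BddMap 𝕜 (τT.coinduced ⇑J.mkQ) (inferInstance) ⇑g ∧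
        ∀ p : M × N, g (J.mkQ (p.1 ⊗ₜ[𝕜] p.2)) = f p := by
    intro f hfb hfbl hfbal
    set bl : M →ₗ[𝕜] N →ₗ[𝕜] E := LinearMap.mk₂ 𝕜 (fun m n => f (m, n))
      (fun m m' n => hfbl.1 m m' n) (fun c m n => hfbl.2.1 c m n)
      (fun m n n' => hfbl.2.2.1 m n n') (fun c m n => hfbl.2.2.2 c m n) with hbl
    set h : TensorProduct 𝕜 M N →ₗ[𝕜] E := TensorProduct.lift bl with hh
    have htm : ∀ (m : M) (n : N), h (m ⊗ₜ[𝕜] n) = f (m, n) := fun m n => by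
      rw [hh]; exact TensorProduct.lift.tmul m n
    have hhb : ∀ s : Set (M × N), VNBdd 𝕜 (inferInstance : TopologicalSpace (M × N)) s →
        VNBdd 𝕜 (inferInstance : TopologicalSpace E)
          (⇑h '' ((fun p : M × N => p.1 ⊗ₜ[𝕜] p.2) '' s)) := by
      intro s hs
      refine vnbdd_mono _ (hfb s hs) ?_
      rintro _ ⟨_, ⟨p, hp, rfl⟩, rfl⟩
      exact ⟨p, hp, (htm p.1 p.2).symm⟩
    have hcont : @Continuous _ _ τT _ ⇑h := key_cont hMs hNs hE τT hτT h hhb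
    have hker : J ≤ LinearMap.ker h := by
      intro x hx
      have hx' : x ∈ @closure _ τT (balancedRel 𝕜 A M N : Set (TensorProduct 𝕜 M N)) := by
        rw [← hJ]; exact hx
      have hclosed : @IsClosed _ τT (⇑h ⁻¹' {0}) := by
        letI := τT
        exact (isClosed_singleton).preimage hcont
      have hsub : (balancedRel 𝕜 A M N : Set (TensorProduct 𝕜 M N)) ⊆ ⇑h ⁻¹' {0} := by
        have hle : balancedRel 𝕜 A M N ≤ LinearMap.ker h := by
          rw [balancedRel, Submodule.span_le]
          rintro _ ⟨a, m, n, rfl⟩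
          simp only [SetLike.mem_coe, LinearMap.mem_ker, map_sub]
          rw [htm, htm, hfbal a m n, sub_self]
        intro y hy
        have := hle hy
        simpa using this
      have hcc : @closure _ τT (balancedRel 𝕜 A M N : Set (TensorProduct 𝕜 M N)) ⊆
          ⇑h ⁻¹' {0} := by
        letI := τT
        exact closure_minimal hsub hclosed
      have := hcc hx'
      simpa using this
    set g : TensorProduct 𝕜 M N ⧸ J →ₗ[𝕜] E := J.liftQ h hker with hgdef
    have hgπ : ∀ x : TensorProduct 𝕜 M N, g (J.mkQ x) = h x := fun x => by
      rw [hgdef, Submodule.mkQ_apply]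
      exact Submodule.liftQ_apply J h x
    have hgc : @Continuous _ _ (τT.coinduced ⇑J.mkQ) _ ⇑g := by
      refine (continuous_coinduced_dom (f := ⇑J.mkQ) (t₁ := τT)).2 ?_
      have : ⇑g ∘ ⇑J.mkQ = ⇑h := funext hgπ
      rw [this]
      exact hcont
    have hgb : BddMap 𝕜 (τT.coinduced ⇑J.mkQ) (inferInstance) ⇑g :=
      bddMap_of_continuous _ _ (fun c x => map_smul g c x) (map_zero g) hgc
    refine ⟨g, ⟨hgb, fun p => by rw [hgπ]; exact htm p.1 p.2⟩, ?_⟩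
    rintro g' ⟨hg'b, hg'e⟩
    refine huniq g' g fun p => ?_
    rw [hg'e p, hgπ]
    exact (htm p.1 p.2).symm
  -- part (iii)
  have part3a : Set.BijOn (fun (g : TensorProduct 𝕜 M N ⧸ J →ₗ[𝕜] E) =>
        (fun p : M × N => g (J.mkQ (p.1 ⊗ₜ[𝕜] p.2))))
      {g | BddMap 𝕜 (τT.coinduced ⇑J.mkQ) (inferInstance) ⇑g}
      {f | BddMap 𝕜 (inferInstance : TopologicalSpace (M × N)) (inferInstance) f ∧
           IsBilinMap 𝕜 f ∧ IsBalancedMap A f} := by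
    refine ⟨fun g hg => part1 g hg, fun g₁ h₁ g₂ h₂ he => huniq g₁ g₂ fun p => ?_, fun f hf => ?_⟩
    · exact congrFun he p
    · obtain ⟨g, ⟨hgb, hge⟩, -⟩ := part2 f hf.1 hf.2.1 hf.2.2
      exact ⟨g, hgb, funext fun p => hge p⟩
  have part3b : ∀ S : Set (TensorProduct 𝕜 M N ⧸ J →ₗ[𝕜] E),
      S ⊆ {g | BddMap 𝕜 (τT.coinduced ⇑J.mkQ) (inferInstance) ⇑g} →
      (FamBdd 𝕜 (τT.coinduced ⇑J.mkQ) (inferInstance)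
          ((fun g : TensorProduct 𝕜 M N ⧸ J →ₗ[𝕜] E =>
            (g : TensorProduct 𝕜 M N ⧸ J → E)) '' S) ↔
       FamBdd 𝕜 (inferInstance : TopologicalSpace (M × N)) (inferInstance)
          ((fun (g : TensorProduct 𝕜 M N ⧸ J →ₗ[𝕜] E) =>
            (fun p : M × N => g (J.mkQ (p.1 ⊗ₜ[𝕜] p.2)))) '' S)) := by
    intro S hSsub
    constructor
    · intro hS s hs
      refine vnbdd_mono _ (hS _ (hπb _ (htmb s hs))) ?_
      intro y hy
      simp only [Set.mem_iUnion, Set.mem_image] at hy ⊢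
      obtain ⟨F, ⟨g, hgS, rfl⟩, p, hp, rfl⟩ := hy
      exact ⟨⇑g, ⟨g, hgS, rfl⟩, J.mkQ (p.1 ⊗ₜ[𝕜] p.2), ⟨p.1 ⊗ₜ[𝕜] p.2, ⟨p, hp, rfl⟩, rfl⟩, rfl⟩
    · intro hS s hs W₀ hW₀
      obtain ⟨W, hW, hWsub, hWc⟩ := hE.2 W₀ hW₀
      set hfam : S → (TensorProduct 𝕜 M N →ₗ[𝕜] E) :=
        fun g => ((g : TensorProduct 𝕜 M N ⧸ J →ₗ[𝕜] E).comp J.mkQ) with hfamdef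
      have hb : ∀ s' : Set (M × N), VNBdd 𝕜 (inferInstance : TopologicalSpace (M × N)) s' →
          VNBdd 𝕜 (inferInstance : TopologicalSpace E)
            (⋃ i, ⇑(hfam i) '' ((fun p : M × N => p.1 ⊗ₜ[𝕜] p.2) '' s')) := by
        intro s' hs'
        refine vnbdd_mono _ (hS s' hs') ?_
        intro y hy
        simp only [Set.mem_iUnion, Set.mem_image] at hy ⊢
        obtain ⟨⟨g, hgS⟩, _, ⟨p, hp, rfl⟩, rfl⟩ := hy
        exact ⟨fun p : M × N => g (J.mkQ (p.1 ⊗ₜ[𝕜] p.2)), ⟨g, hgS, rfl⟩, p, hp, rfl⟩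
      have hVpre := key_lemma hMs hNs hE τT hτT hfam hb hW hWc
      set V : Set (TensorProduct 𝕜 M N ⧸ J) :=
        ⋂ i : S, ⇑(i : TensorProduct 𝕜 M N ⧸ J →ₗ[𝕜] E) ⁻¹' W with hVdef
      have hpre : ⇑J.mkQ ⁻¹' V = ⋂ i : S, ⇑(hfam i) ⁻¹' W := by
        ext x
        simp only [Set.mem_preimage, Set.mem_iInter, hfamdef, LinearMap.coe_comp,
          Function.comp_apply, hVdef]
      have hVnh : V ∈ @nhds _ (τT.coinduced ⇑J.mkQ) 0 := by
        refine quot_mem_nhds τT hTg J ?_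
        rw [hpre]
        exact hVpre
      rw [absorbs_iff_norm]
      obtain ⟨r, hr⟩ := absorbs_iff_norm.1 (hs V hVnh)
      refine ⟨r, fun c hc => ?_⟩
      intro y hy
      simp only [Set.mem_iUnion, Set.mem_image] at hy
      obtain ⟨F, ⟨g, hgS, rfl⟩, x, hx, rfl⟩ := hy
      obtain ⟨v, hv, rfl⟩ := Set.mem_smul_set.1 (hr c hc hx)
      refine Set.mem_smul_set.2 ⟨g v, hWsub ?_, (map_smul g c v).symm⟩
      exact Set.mem_iInter.1 hv ⟨g, hgS⟩
  -- part (iv)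
  have fstb : BddMap 𝕜 (inferInstance : TopologicalSpace (M × N)) (inferInstance)
      (Prod.fst : M × N → M) :=
    bddMap_of_continuous _ _ (fun _ _ => rfl) rfl continuous_fst
  have sndb : BddMap 𝕜 (inferInstance : TopologicalSpace (M × N)) (inferInstance)
      (Prod.snd : M × N → N) :=
    bddMap_of_continuous _ _ (fun _ _ => rfl) rfl continuous_snd
  have part4a : Set.BijOn (fun (f : M × N → E) => Function.curry f)
      {f | BddMap 𝕜 (inferInstance : TopologicalSpace (M × N)) (inferInstance) f ∧
           IsBilinMap 𝕜 f ∧ IsBalancedMap A f}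
      {h | IsCurriedBddHom 𝕜 A (inferInstance) (inferInstance) (inferInstance) h} := by
    refine ⟨fun f hf => ?_, fun f _ f' _ he => ?_, fun h hh => ?_⟩
    · refine ⟨fun m m' => funext fun n => hf.2.1.1 m m' n,
        fun c m => funext fun n => hf.2.1.2.1 c m n,
        fun a m => funext fun n => hf.2.2 a m n,
        fun m n n' => hf.2.1.2.2.1 m n n',
        fun m c n => hf.2.1.2.2.2 c m n,
        fun m s hs => ?_, fun B hB s hs => ?_⟩
      · refine vnbdd_mono _ (hf.1 _ (vnbdd_prod _ _ (vnbdd_singleton _ hMs m) hs)) ?_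
        rintro _ ⟨n, hn, rfl⟩
        exact ⟨(m, n), ⟨rfl, hn⟩, rfl⟩
      · refine vnbdd_mono _ (hf.1 _ (vnbdd_prod _ _ hB hs)) ?_
        intro y hy
        simp only [Set.mem_iUnion, Set.mem_image] at hy
        obtain ⟨φ, ⟨m, hm, rfl⟩, n, hn, rfl⟩ := hy
        exact ⟨(m, n), ⟨hm, hn⟩, rfl⟩
    · funext p
      rw [← Prod.mk.eta (p := p)]
      exact congrFun (congrFun he p.1) p.2
    · refine ⟨fun p => h p.1 p.2, ⟨?_, ⟨?_, ?_, ?_, ?_⟩, ?_⟩, ?_⟩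
      · intro s hs
        refine vnbdd_mono _ (hh.2.2.2.2.2.2 _ (fstb s hs) _ (sndb s hs)) ?_
        rintro _ ⟨p, hp, rfl⟩
        simp only [Set.mem_iUnion, Set.mem_image]
        exact ⟨h p.1, ⟨p.1, ⟨p, hp, rfl⟩, rfl⟩, p.2, ⟨p, hp, rfl⟩, rfl⟩
      · exact fun m m' n => congrFun (hh.1 m m') n
      · exact fun c m n => congrFun (hh.2.1 c m) n
      · exact fun m n n' => hh.2.2.2.1 m n n'
      · exact fun c m n => hh.2.2.2.2.1 m c n
      · exact fun a m n => congrFun (hh.2.2.1 a m) n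
      · funext m n
        rfl
  have part4b : ∀ S : Set (M × N → E),
      S ⊆ {f | BddMap 𝕜 (inferInstance : TopologicalSpace (M × N)) (inferInstance) f ∧
           IsBilinMap 𝕜 f ∧ IsBalancedMap A f} →
      (FamBdd 𝕜 (inferInstance : TopologicalSpace (M × N)) (inferInstance) S ↔
       CurFamBdd 𝕜 (inferInstance) (inferInstance) (inferInstance)
         (Function.curry '' S)) := by
    intro S hSsub
    constructor
    · intro hS B hB s hs
      refine vnbdd_mono _ (hS _ (vnbdd_prod _ _ hB hs)) ?_
      intro y hy
      simp only [Set.mem_iUnion, Set.mem_image] at hy ⊢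
      obtain ⟨φ, ⟨h', ⟨f, hfS, rfl⟩, m, hm, rfl⟩, n, hn, rfl⟩ := hy
      exact ⟨f, hfS, (m, n), ⟨hm, hn⟩, rfl⟩
    · intro hC s hs
      have := hC _ (fstb s hs) _ (sndb s hs)
      refine vnbdd_mono _ this ?_
      intro y hy
      simp only [Set.mem_iUnion, Set.mem_image] at hy ⊢
      obtain ⟨f, hfS, p, hp, rfl⟩ := hy
      exact ⟨Function.curry f p.1, ⟨Function.curry f, ⟨f, hfS, rfl⟩, p.1, ⟨p, hp, rfl⟩, rfl⟩,
        p.2, ⟨p, hp, rfl⟩, rfl⟩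
  -- part (v)
  have part5a : Set.BijOn (fun (f : M × N → E) => (fun n m => f (m, n)))
      {f | BddMap 𝕜 (inferInstance : TopologicalSpace (M × N)) (inferInstance) f ∧
           IsBilinMap 𝕜 f ∧ IsBalancedMap A f}
      {k | IsCurriedBddHom' 𝕜 A (inferInstance) (inferInstance) (inferInstance) k} := by
    refine ⟨fun f hf => ?_, fun f _ f' _ he => ?_, fun k hk => ?_⟩
    · refine ⟨fun n n' => funext fun m => hf.2.1.2.2.1 m n n',
        fun c n => funext fun m => hf.2.1.2.2.2 c m n,
        fun a n => funext fun m => (hf.2.2 a m n).symm,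
        fun n m m' => hf.2.1.1 m m' n,
        fun n c m => hf.2.1.2.1 c m n,
        fun n s hs => ?_, fun B hB s hs => ?_⟩
      · refine vnbdd_mono _ (hf.1 _ (vnbdd_prod _ _ hs (vnbdd_singleton _ hNs n))) ?_
        rintro _ ⟨m, hm, rfl⟩
        exact ⟨(m, n), ⟨hm, rfl⟩, rfl⟩
      · refine vnbdd_mono _ (hf.1 _ (vnbdd_prod _ _ hs hB)) ?_
        intro y hy
        simp only [Set.mem_iUnion, Set.mem_image] at hy
        obtain ⟨φ, ⟨n, hn, rfl⟩, m, hm, rfl⟩ := hy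
        exact ⟨(m, n), ⟨hm, hn⟩, rfl⟩
    · funext p
      rw [← Prod.mk.eta (p := p)]
      exact congrFun (congrFun he p.2) p.1
    · refine ⟨fun p => k p.2 p.1, ⟨?_, ⟨?_, ?_, ?_, ?_⟩, ?_⟩, ?_⟩
      · intro s hs
        refine vnbdd_mono _ (hk.2.2.2.2.2.2 _ (sndb s hs) _ (fstb s hs)) ?_
        rintro _ ⟨p, hp, rfl⟩
        simp only [Set.mem_iUnion, Set.mem_image]
        exact ⟨k p.2, ⟨p.2, ⟨p, hp, rfl⟩, rfl⟩, p.1, ⟨p, hp, rfl⟩, rfl⟩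
      · exact fun m m' n => hk.2.2.2.1 n m m'
      · exact fun c m n => hk.2.2.2.2.1 n c m
      · exact fun m n n' => congrFun (hk.1 n n') m
      · exact fun c m n => congrFun (hk.2.1 c n) m
      · exact fun a m n => (congrFun (hk.2.2.1 a n) m).symm
      · funext n m
        rfl
  have part5b : ∀ S : Set (M × N → E),
      S ⊆ {f | BddMap 𝕜 (inferInstance : TopologicalSpace (M × N)) (inferInstance) f ∧
           IsBilinMap 𝕜 f ∧ IsBalancedMap A f} →
      (FamBdd 𝕜 (inferInstance : TopologicalSpace (M × N)) (inferInstance) S ↔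
       CurFamBdd 𝕜 (inferInstance) (inferInstance) (inferInstance)
         ((fun (f : M × N → E) => (fun n m => f (m, n))) '' S)) := by
    intro S hSsub
    constructor
    · intro hS B hB s hs
      refine vnbdd_mono _ (hS _ (vnbdd_prod _ _ hs hB)) ?_
      intro y hy
      simp only [Set.mem_iUnion, Set.mem_image] at hy ⊢
      obtain ⟨φ, ⟨k', ⟨f, hfS, rfl⟩, n, hn, rfl⟩, m, hm, rfl⟩ := hy
      exact ⟨f, hfS, (m, n), ⟨hm, hn⟩, rfl⟩
    · intro hC s hs
      have := hC _ (sndb s hs) _ (fstb s hs)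
      refine vnbdd_mono _ this ?_
      intro y hy
      simp only [Set.mem_iUnion, Set.mem_image] at hy ⊢
      obtain ⟨f, hfS, p, hp, rfl⟩ := hy
      exact ⟨(fun n m => f (m, n)) p.2, ⟨fun n m => f (m, n), ⟨f, hfS, rfl⟩, p.2, ⟨p, hp, rfl⟩,
        rfl⟩, p.1, ⟨p, hp, rfl⟩, rfl⟩
  exact ⟨part1, part2, ⟨part3a, part3b⟩, ⟨part4a, part4b⟩, ⟨part5a, part5b⟩⟩
end

section
/- Let a locally convex space E be the strict inductive limit of an increasing sequence of subspaces E_n with embeddings ι_n : E_n → E, and let F and G be arbitrary locally convex spaces. Then a bilinear mapping f : E × F → G is bounded if and only if all compositions f ∘ (ι_n × id) : E_n × F → G are bounded. -/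
/-!
STATEMENT 16: if a locally convex space `E` is the strict inductive limit of an
increasing sequence of subspaces `Eₙ`, then a bilinear map `f : E × F → G` is
bounded iff all the compositions `f ∘ (ιₙ × id) : Eₙ × F → G` are bounded.
-/

open MulOpposite Set
open scoped TensorProduct Pointwise

theorem statement16 {𝕜 : Type*} [RCLike 𝕜]
    (E : Type*) [AddCommGroup E] [Module 𝕜 E] [TopologicalSpace E] [T2Space E]
    (hE : IsLCTop 𝕜 E (inferInstance))
    (F : Type*) [AddCommGroup F] [Module 𝕜 F] [TopologicalSpace F] [T2Space F]
    (hF : IsLCTop 𝕜 F (inferInstance))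
    (G : Type*) [AddCommGroup G] [Module 𝕜 G] [TopologicalSpace G] [T2Space G]
    (hG : IsLCTop 𝕜 G (inferInstance))
    -- the increasing sequence of subspaces, with their own topologies
    (p : ℕ → Submodule 𝕜 E) (hmono : Monotone p)
    (t : ∀ n, TopologicalSpace ↥(p n))
    (hlc : ∀ n, IsLCTop 𝕜 ↥(p n) (t n))
    -- each Eₙ₊₁ induces on Eₙ its given topology (strictness)
    (hstep : ∀ n, t n =
      (t (n + 1)).induced (Submodule.inclusion (hmono (Nat.le_succ n))))
    -- E carries the finest locally convex topology making all inclusions continuous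
    (hcont : ∀ n, @Continuous _ _ (t n) (inferInstance) (Subtype.val : ↥(p n) → E))
    (hfinest : ∀ τ' : TopologicalSpace E, IsLCTop 𝕜 E τ' →
      (∀ n, @Continuous _ _ (t n) τ' (Subtype.val : ↥(p n) → E)) →
      (inferInstance : TopologicalSpace E) ≤ τ')
    -- E induces on each Eₙ its given topology (a property of strict inductive limits)
    (hind : ∀ n, t n =
      TopologicalSpace.induced (Subtype.val : ↥(p n) → E) (inferInstance))
    -- every bounded subset of E is contained in some Eₙ
    (hbdd : ∀ s : Set E, VNBdd 𝕜 (inferInstance) s → ∃ n, s ⊆ (p n : Set E)) :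
    ∀ f : E × F → G, IsBilinMap 𝕜 f →
      (BddMap 𝕜 (inferInstance : TopologicalSpace (E × F)) (inferInstance) f ↔
       ∀ n, BddMap 𝕜 (@instTopologicalSpaceProd ↥(p n) F (t n) (inferInstance))
         (inferInstance) (fun q : ↥(p n) × F => f ((q.1 : E), q.2))) := by
  intro f hf
  constructor
  · -- forward direction
    intro hB n s hs
    have key : VNBdd 𝕜 (inferInstance)
        ((fun q : ↥(p n) × F => ((q.1 : E), q.2)) '' s) := by
      intro W hW
      rw [mem_nhds_prod_iff] at hW
      obtain ⟨U, hU, V, hV, hUV⟩ := hW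
      have hU0 : (Subtype.val : ↥(p n) → E) ⁻¹' U ∈ nhds (0 : ↥(p n)) := by
        have := (hcont n).continuousAt (x := (0 : ↥(p n)))
        exact this hU
      have hpre : ((Subtype.val : ↥(p n) → E) ⁻¹' U) ×ˢ V ∈ nhds (0 : ↥(p n) × F) :=
        prod_mem_nhds hU0 hV
      have habs := hs _ hpre
      unfold Absorbs at habs ⊢
      filter_upwards [habs] with a ha
      rintro _ ⟨q, hq, rfl⟩
      obtain ⟨q', hq', rfl⟩ := ha hq
      have hmem : a • ((q'.1 : E), q'.2) ∈ a • W :=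
        smul_mem_smul_set (hUV ⟨hq'.1, hq'.2⟩)
      simpa [Prod.smul_def] using hmem
    intro W hW
    have h2 := hB _ key W hW
    rwa [Set.image_image] at h2
  · -- backward direction
    intro hB s hs
    have hfst : VNBdd 𝕜 (inferInstance) (Prod.fst '' s) := by
      intro U hU
      have hpre : (Prod.fst : E × F → E) ⁻¹' U ∈ nhds (0 : E × F) :=
        continuous_fst.continuousAt (x := (0 : E × F)) hU
      have habs := hs _ hpre
      unfold Absorbs at habs ⊢
      filter_upwards [habs] with a ha
      rintro _ ⟨q, hq, rfl⟩
      obtain ⟨q', hq', rfl⟩ := ha hq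
      exact smul_mem_smul_set hq'
    obtain ⟨n, hn⟩ := hbdd _ hfst
    set s' : Set (↥(p n) × F) := {q | ((q.1 : E), q.2) ∈ s} with hs'def
    have hsub : f '' s ⊆ (fun q : ↥(p n) × F => f ((q.1 : E), q.2)) '' s' := by
      rintro _ ⟨⟨x, y⟩, hxy, rfl⟩
      have hx : x ∈ p n := hn ⟨(x, y), hxy, rfl⟩
      exact ⟨(⟨x, hx⟩, y), hxy, rfl⟩
    have hs'bdd : VNBdd 𝕜 (inferInstance) s' := by
      intro W hW
      rw [mem_nhds_prod_iff] at hW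
      obtain ⟨U', hU', V, hV, hUV⟩ := hW
      rw [hind n, nhds_induced, Filter.mem_comap] at hU'
      obtain ⟨U, hU, hUsub⟩ := hU'
      have hU0 : U ∈ nhds (0 : E) := by simpa using hU
      have hmem : U ×ˢ V ∈ nhds (0 : E × F) := prod_mem_nhds hU0 hV
      have habs := hs _ hmem
      unfold Absorbs at habs ⊢
      filter_upwards [habs, Bornology.eventually_ne_cobounded (0 : 𝕜)] with a ha ha0
      intro q hq
      obtain ⟨⟨u, v⟩, huv, heq⟩ := ha hq
      have h1 : ((q.1 : E)) = a • u := congrArg Prod.fst heq.symm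
      have h2 : q.2 = a • v := congrArg Prod.snd heq.symm
      refine ⟨(a⁻¹ • q.1, a⁻¹ • q.2), hUV ⟨hUsub ?_, ?_⟩, ?_⟩
      · show ((a⁻¹ • q.1 : ↥(p n)) : E) ∈ U
        rw [Submodule.coe_smul, h1, inv_smul_smul₀ ha0]
        exact huv.1
      · show a⁻¹ • q.2 ∈ V
        rw [h2, inv_smul_smul₀ ha0]
        exact huv.2
      · show a • (a⁻¹ • q.1, a⁻¹ • q.2) = q
        simp [Prod.smul_def, smul_inv_smul₀ ha0]
    intro W hW
    exact (hB n _ hs'bdd W hW).mono_right hsub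
end

section
/- Let A be a commutative bounded algebra over 𝕂 and Q a bounded A-module. Let F be a bounded A-module which is free with a finite basis b_1, …, b_n whose dual basis b_1^*, …, b_n^* consists of bounded A-linear functionals F → A, and let P be a bounded A-module for which there exist bounded A-linear mappings ι : P → F and π : F → P with π ∘ ι = id_P. Then the canonical 𝕂-linear mapping θ_P : L^b_A(P, A) ⊗_A^β Q → L^b_A(P, Q), induced by (u^*, q) ↦ [p ↦ u^*(p) · q], is a bornological isomorphism. -/
/-!
STATEMENT 17: for a commutative bounded algebra `A`, a bounded `A`-module `W`,
a free bounded `A`-module `F` with a finite basis whose dual basis consists of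
bounded functionals, and a bounded direct summand `P` of `F` (via bounded `A`-linear
maps `ι : P → F`, `π : F → P` with `π ∘ ι = id`), the canonical map
`θ_P : L^b_A(P, A) ⊗_A^β W → L^b_A(P, W)` induced by `(u*, w) ↦ (p ↦ u*(p)·w)`
is a bornological isomorphism.  Here `L^b_A(P, A)` is realized as an `A`-module `D`
identified (via `eD`) with the bounded maps in `P →ₗ[A] A`, carrying a topology `tD`
whose von Neumann bounded sets are exactly the equibounded sets (the bornology of
the topology of uniform convergence on bounded sets), and similarly the bornology
on `L^b_A(P, W)` is given by equiboundedness.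
-/

open MulOpposite Set
open scoped TensorProduct Pointwise

section St17Aux

variable {𝕜 : Type*} [RCLike 𝕜]

namespace St17

variable {E F G : Type*} [AddCommGroup E] [Module 𝕜 E] [AddCommGroup F] [Module 𝕜 F]
  [AddCommGroup G] [Module 𝕜 G]

lemma vnbdd_subset {τ : TopologicalSpace E} {s t : Set E} (h : VNBdd 𝕜 τ s) (hts : t ⊆ s) :
    VNBdd 𝕜 τ t :=
  fun V hV => (h V hV).mono_right hts

lemma bddMap_comp {τ1 : TopologicalSpace E} {τ2 : TopologicalSpace F} {τ3 : TopologicalSpace G}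
    {f : E → F} {g : F → G} (hf : BddMap 𝕜 τ1 τ2 f) (hg : BddMap 𝕜 τ2 τ3 g) :
    BddMap 𝕜 τ1 τ3 (g ∘ f) := fun s hs => by
  rw [Set.image_comp]; exact hg _ (hf _ hs)

lemma vnbdd_singleton {τ : TopologicalSpace E} (h : IsLinearTop 𝕜 E τ) (x : E) :
    VNBdd 𝕜 τ {x} := by
  letI := τ; haveI := h.2
  exact fun V hV => Bornology.isVonNBounded_singleton (𝕜 := 𝕜) x hV

lemma vnbdd_add {τ : TopologicalSpace E} (h : IsLinearTop 𝕜 E τ) {s t : Set E}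
    (hs : VNBdd 𝕜 τ s) (ht : VNBdd 𝕜 τ t) : VNBdd 𝕜 τ (s + t) := by
  letI := τ; haveI := h.1
  have hs' : Bornology.IsVonNBounded 𝕜 s := fun V hV => hs V hV
  have ht' : Bornology.IsVonNBounded 𝕜 t := fun V hV => ht V hV
  exact fun V hV => (hs'.add ht') hV

lemma sum_mem_setSum {ι : Type*} (s : Finset ι) (f : ι → E) (T : ι → Set E)
    (h : ∀ i ∈ s, f i ∈ T i) : (∑ i ∈ s, f i) ∈ (∑ i ∈ s, T i) := by
  classical
  induction s using Finset.induction_on with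
  | empty => simp [Set.mem_zero]
  | insert _ _ hx ih =>
    rw [Finset.sum_insert hx, Finset.sum_insert hx]
    exact Set.add_mem_add (h _ (Finset.mem_insert_self _ _))
      (ih fun i hi => h i (Finset.mem_insert_of_mem hi))

lemma vnbdd_sum {τ : TopologicalSpace E} (h : IsLinearTop 𝕜 E τ) {ι : Type*} (s : Finset ι)
    (T : ι → Set E) (hT : ∀ i ∈ s, VNBdd 𝕜 τ (T i)) : VNBdd 𝕜 τ (∑ i ∈ s, T i) := by
  classical
  induction s using Finset.induction_on with
  | empty =>
    rw [Finset.sum_empty, ← Set.singleton_zero]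
    exact vnbdd_singleton h 0
  | insert _ _ hx ih =>
    rw [Finset.sum_insert hx]
    exact vnbdd_add h (hT _ (Finset.mem_insert_self _ _))
      (ih fun i hi => hT i (Finset.mem_insert_of_mem hi))

lemma vnbdd_prod {τE : TopologicalSpace E} {τF : TopologicalSpace F} {s : Set E} {t : Set F}
    (hs : VNBdd 𝕜 τE s) (ht : VNBdd 𝕜 τF t) :
    VNBdd 𝕜 (@instTopologicalSpaceProd E F τE τF) (s ×ˢ t) := by
  intro V hV
  letI := τE; letI := τF
  have h0 : (0 : E × F) = ((0 : E), (0 : F)) := rfl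
  rw [h0, mem_nhds_prod_iff] at hV
  obtain ⟨u, hu, v, hv, huv⟩ := hV
  refine ((hs u hu).and (ht v hv)).mono ?_
  rintro a ⟨ha1, ha2⟩ ⟨x, y⟩ ⟨hx, hy⟩
  rcases Set.mem_smul_set.mp (ha1 hx) with ⟨x', hx', rfl⟩
  rcases Set.mem_smul_set.mp (ha2 hy) with ⟨y', hy', rfl⟩
  exact Set.mem_smul_set.mpr ⟨(x', y'), huv ⟨hx', hy'⟩, rfl⟩

lemma bddMap_of_cont {τE : TopologicalSpace E} {τF : TopologicalSpace F} (f : E →ₗ[𝕜] F)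
    (hf : @Continuous _ _ τE τF f) : BddMap 𝕜 τE τF f := by
  intro s hs V hV
  have hmem : f ⁻¹' V ∈ @nhds E τE 0 := by
    have h := @Continuous.tendsto _ _ τE τF f hf 0
    rw [map_zero] at h
    exact h hV
  filter_upwards [hs _ hmem] with a ha
  rintro y ⟨x, hx, rfl⟩
  rcases Set.mem_smul_set.mp (ha hx) with ⟨x', hx', rfl⟩
  exact Set.mem_smul_set.mpr ⟨f x', hx', (map_smul f a x').symm⟩

lemma absorbs_preimage (f : E →ₗ[𝕜] F) {U : Set F} {s : Set E}
    (h : Absorbs 𝕜 U (f '' s)) : Absorbs 𝕜 (f ⁻¹' U) s := by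
  filter_upwards [h, Bornology.eventually_ne_cobounded (0 : 𝕜)] with a ha ha0 x hx
  rw [Set.mem_smul_set_iff_inv_smul_mem₀ ha0, Set.mem_preimage, map_smul]
  exact (Set.mem_smul_set_iff_inv_smul_mem₀ ha0 U (f x)).mp (ha ⟨x, hx, rfl⟩)

lemma rcConvex_inter {s t : Set E} (hs : RCConvex 𝕜 s) (ht : RCConvex 𝕜 t) :
    RCConvex 𝕜 (s ∩ t) :=
  fun _ hx _ hy r hr0 hr1 => ⟨hs hx.1 hy.1 r hr0 hr1, ht hx.2 hy.2 r hr0 hr1⟩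

lemma rcConvex_preimage (f : E →ₗ[𝕜] F) {t : Set F} (ht : RCConvex 𝕜 t) :
    RCConvex 𝕜 (f ⁻¹' t) := by
  intro x hx y hy r hr0 hr1
  have : f ((r : 𝕜) • x + (((1 - r : ℝ) : 𝕜)) • y)
      = (r : 𝕜) • f x + (((1 - r : ℝ) : 𝕜)) • f y := by
    rw [map_add, map_smul, map_smul]
  exact Set.mem_preimage.mpr (this ▸ ht hx hy r hr0 hr1)

/-- A bounded linear map out of the bornological tensor product is continuous. -/
lemma beta_continuous {M N : Type*} [AddCommGroup M] [Module 𝕜 M] [AddCommGroup N] [Module 𝕜 N]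
    {τM : TopologicalSpace M} {τN : TopologicalSpace N}
    {τT : TopologicalSpace (TensorProduct 𝕜 M N)}
    (hτT : IsBetaTensorTop 𝕜 τM τN τT)
    {τG : TopologicalSpace G} (hG : IsLCTop 𝕜 G τG)
    (L : TensorProduct 𝕜 M N →ₗ[𝕜] G)
    (hL : BddMap 𝕜 (@instTopologicalSpaceProd M N τM τN) τG
      (fun p : M × N => L (p.1 ⊗ₜ[𝕜] p.2))) :
    @Continuous _ _ τT τG L := by
  set τi := TopologicalSpace.induced L τG with hτi
  have hadd : @IsTopologicalAddGroup _ (τT ⊓ τi) _ := by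
    refine topologicalAddGroup_inf hτT.1.1.1 ?_
    letI := τG; haveI := hG.1.1
    exact topologicalAddGroup_induced L.toAddMonoidHom
  have hsmul : @ContinuousSMul 𝕜 _ _ _ (τT ⊓ τi) := by
    haveI h1 := hτT.1.1.2
    haveI h2 : @ContinuousSMul 𝕜 _ _ _ τi := by
      letI := τG; haveI := hG.1.2
      exact continuousSMul_induced L
    exact @continuousSMul_inf _ _ _ _ _ _ h1 h2
  have hLC : IsLCTop 𝕜 (TensorProduct 𝕜 M N) (τT ⊓ τi) := by
    refine ⟨⟨hadd, hsmul⟩, ?_⟩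
    intro U hU
    rw [nhds_inf (t₁ := τT) (t₂ := τi)] at hU
    rcases Filter.mem_inf_iff.mp hU with ⟨V₁, hV₁, V₂, hV₂, rfl⟩
    obtain ⟨C₁, hC₁n, hC₁s, hC₁c⟩ := hτT.1.2 V₁ hV₁
    have hV₂' : V₂ ∈ Filter.comap L (@nhds _ τG 0) := by
      have := hV₂
      rw [hτi, nhds_induced, map_zero] at this
      exact this
    rcases Filter.mem_comap.mp hV₂' with ⟨U₂, hU₂, hsub₂⟩
    obtain ⟨C₂, hC₂n, hC₂s, hC₂c⟩ := hG.2 U₂ hU₂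
    refine ⟨C₁ ∩ L ⁻¹' C₂, ?_, ?_, rcConvex_inter hC₁c (rcConvex_preimage L hC₂c)⟩
    · rw [nhds_inf (t₁ := τT) (t₂ := τi)]
      refine Filter.inter_mem (Filter.mem_inf_of_left hC₁n) (Filter.mem_inf_of_right ?_)
      rw [hτi, nhds_induced, map_zero]
      exact Filter.preimage_mem_comap hC₂n
    · exact Set.inter_subset_inter hC₁s (subset_trans (Set.preimage_mono hC₂s) hsub₂)
  have hBdd : BddMap 𝕜 (@instTopologicalSpaceProd M N τM τN) (τT ⊓ τi)
      (fun p : M × N => p.1 ⊗ₜ[𝕜] p.2) := by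
    intro s hs V hV
    rw [nhds_inf (t₁ := τT) (t₂ := τi)] at hV
    rcases Filter.mem_inf_iff.mp hV with ⟨V₁, hV₁, V₂, hV₂, rfl⟩
    have h1 : Absorbs 𝕜 V₁ ((fun p : M × N => p.1 ⊗ₜ[𝕜] p.2) '' s) := hτT.2.1 s hs V₁ hV₁
    have hV₂' : V₂ ∈ Filter.comap L (@nhds _ τG 0) := by
      have := hV₂
      rw [hτi, nhds_induced, map_zero] at this
      exact this
    rcases Filter.mem_comap.mp hV₂' with ⟨U₂, hU₂, hsub₂⟩
    have h2 : Absorbs 𝕜 U₂ (L '' ((fun p : M × N => p.1 ⊗ₜ[𝕜] p.2) '' s)) := by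
      rw [Set.image_image]
      exact hL s hs U₂ hU₂
    exact h1.inter ((absorbs_preimage L h2).mono_left hsub₂)
  have hle : τT ≤ τi := le_trans (hτT.2.2 _ hLC hBdd) inf_le_right
  exact continuous_iff_le_induced.mpr hle

end St17

end St17Aux


theorem statement17 {𝕜 : Type*} [RCLike 𝕜]
    -- A, a commutative bounded algebra
    (A : Type*) [CommRing A] [Algebra 𝕜 A] [TopologicalSpace A] [T2Space A]
    (hA : IsLCTop 𝕜 A (inferInstance))
    (hAmul : BddMap 𝕜 (inferInstance : TopologicalSpace (A × A)) (inferInstance)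
      (fun p : A × A => p.1 * p.2))
    -- W, a bounded A-module
    (W : Type*) [AddCommGroup W] [Module 𝕜 W] [Module A W] [IsScalarTower 𝕜 A W]
    [TopologicalSpace W] [T2Space W] (hW : IsLCTop 𝕜 W (inferInstance))
    (hWmod : BddMap 𝕜 (inferInstance : TopologicalSpace (A × W)) (inferInstance)
      (fun p : A × W => p.1 • p.2))
    -- F, a free bounded A-module with a finite basis b whose dual basis is bounded
    (F : Type*) [AddCommGroup F] [Module 𝕜 F] [Module A F] [IsScalarTower 𝕜 A F]
    [TopologicalSpace F] [T2Space F] (hF : IsLCTop 𝕜 F (inferInstance))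
    (hFmod : BddMap 𝕜 (inferInstance : TopologicalSpace (A × F)) (inferInstance)
      (fun p : A × F => p.1 • p.2))
    (nb : ℕ) (b : Module.Basis (Fin nb) A F)
    (hbdual : ∀ i, BddMap 𝕜 (inferInstance : TopologicalSpace F) (inferInstance)
      (fun x => b.coord i x))
    -- P, a bounded A-module which is a bounded direct summand of F
    (P : Type*) [AddCommGroup P] [Module 𝕜 P] [Module A P] [IsScalarTower 𝕜 A P]
    [TopologicalSpace P] [T2Space P] (hP : IsLCTop 𝕜 P (inferInstance))
    (hPmod : BddMap 𝕜 (inferInstance : TopologicalSpace (A × P)) (inferInstance)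
      (fun p : A × P => p.1 • p.2))
    (ι : P →ₗ[A] F) (πF : F →ₗ[A] P) (hπι : ∀ x, πF (ι x) = x)
    (hι : BddMap 𝕜 (inferInstance : TopologicalSpace P) (inferInstance) ⇑ι)
    (hπ : BddMap 𝕜 (inferInstance : TopologicalSpace F) (inferInstance) ⇑πF)
    -- D, a realization of L^b_A(P, A): an A-module identified via `eD` with the
    -- submodule of bounded maps in `P →ₗ[A] A`
    (D : Type*) [AddCommGroup D] [Module 𝕜 D] [Module A D] [IsScalarTower 𝕜 A D]
    (eD : D →ₗ[A] (P →ₗ[A] A)) (heD : Function.Injective ⇑eD)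
    (heDrange : ∀ u : P →ₗ[A] A,
      (∃ d, eD d = u) ↔ BddMap 𝕜 (inferInstance : TopologicalSpace P) (inferInstance) ⇑u)
    -- tD, a topology on D whose von Neumann bounded sets are the equibounded sets
    (tD : TopologicalSpace D)
    (htD : ∀ S : Set D, VNBdd 𝕜 tD S ↔
      ∀ B : Set P, VNBdd 𝕜 (inferInstance) B →
        VNBdd 𝕜 (inferInstance : TopologicalSpace A) (⋃ d ∈ S, ⇑(eD d) '' B))
    -- the bornological tensor product D ⊗_A^β W
    (τT : TopologicalSpace (TensorProduct 𝕜 D W))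
    (hτT : IsBetaTensorTop 𝕜 tD (inferInstance) τT)
    (J : Submodule 𝕜 (TensorProduct 𝕜 D W))
    (hJ : (J : Set (TensorProduct 𝕜 D W)) = @closure _ τT (balancedRelComm 𝕜 A D W)) :
    -- θ_P exists, is induced by (u*, w) ↦ [p ↦ u*(p) • w], and is a bornological
    -- isomorphism onto L^b_A(P, W)
    ∃ θ : (TensorProduct 𝕜 D W ⧸ J) →ₗ[𝕜] (P →ₗ[A] W),
      (∀ (d : D) (w : W) (q : P),
        θ (J.mkQ (d ⊗ₜ[𝕜] w)) q = eD d q • w) ∧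
      Function.Injective ⇑θ ∧
      (∀ ℓ : P →ₗ[A] W, (∃ x, θ x = ℓ) ↔
        BddMap 𝕜 (inferInstance : TopologicalSpace P) (inferInstance) ⇑ℓ) ∧
      -- θ is bounded
      (∀ S : Set (TensorProduct 𝕜 D W ⧸ J), VNBdd 𝕜 (τT.coinduced J.mkQ) S →
        ∀ B : Set P, VNBdd 𝕜 (inferInstance) B →
          VNBdd 𝕜 (inferInstance : TopologicalSpace W) (⋃ x ∈ S, ⇑(θ x) '' B)) ∧
      -- θ⁻¹ is bounded
      (∀ S : Set (TensorProduct 𝕜 D W ⧸ J),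
        (∀ B : Set P, VNBdd 𝕜 (inferInstance) B →
          VNBdd 𝕜 (inferInstance : TopologicalSpace W) (⋃ x ∈ S, ⇑(θ x) '' B)) →
        VNBdd 𝕜 (τT.coinduced J.mkQ) S) := by
  classical
  -- scalar commutation
  haveI hcAW : SMulCommClass A 𝕜 W := by
    constructor
    intro a c w
    rw [← algebraMap_smul A c w, ← algebraMap_smul A c (a • w), smul_smul, smul_smul, mul_comm]
  haveI hcKW : SMulCommClass 𝕜 A W := SMulCommClass.symm A 𝕜 W
  -- evaluation maps
  let ev : P → ((P →ₗ[A] W) →ₗ[𝕜] W) := fun q =>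
    { toFun := fun ℓ => ℓ q
      map_add' := fun _ _ => rfl
      map_smul' := fun _ _ => rfl }
  -- the bilinear map (d, w) ↦ (p ↦ eD d p • w)
  let bil : D →ₗ[𝕜] W →ₗ[𝕜] (P →ₗ[A] W) := LinearMap.mk₂ 𝕜
    (fun d w => (eD d).smulRight w)
    (fun d d' w => by ext p; simp [add_smul])
    (fun c d w => by
      ext p
      show eD (c • d) p • w = c • (eD d p • w)
      rw [← algebraMap_smul A c d, map_smul, LinearMap.smul_apply, smul_assoc,
        algebraMap_smul])
    (fun d w w' => by ext p; simp [smul_add])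
    (fun c d w => by
      ext p
      show eD d p • (c • w) = c • (eD d p • w)
      rw [smul_comm])
  let θ₀ : TensorProduct 𝕜 D W →ₗ[𝕜] (P →ₗ[A] W) := TensorProduct.lift bil
  have hθ₀tmul : ∀ (d : D) (w : W) (q : P), θ₀ (d ⊗ₜ[𝕜] w) q = eD d q • w := by
    intro d w q
    simp [θ₀, bil]
  -- the chosen preimages of the dual basis of P
  have hdd0 : ∀ i : Fin nb, ∃ d : D, eD d = (b.coord i).comp ι := by
    intro i
    refine (heDrange _).mpr ?_
    rw [LinearMap.coe_comp]
    exact St17.bddMap_comp hι (hbdual i)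
  choose dd hdd using hdd0
  -- the section σ'
  let σ' : (P →ₗ[A] W) →ₗ[𝕜] TensorProduct 𝕜 D W :=
    ∑ i : Fin nb, (TensorProduct.mk 𝕜 D W (dd i)).comp (ev (πF (b i)))
  have hσ' : ∀ ℓ : P →ₗ[A] W, σ' ℓ = ∑ i : Fin nb, (dd i) ⊗ₜ[𝕜] ℓ (πF (b i)) := by
    intro ℓ
    simp [σ', ev, TensorProduct.mk_apply]
  -- basis reproduction
  have hrepr : ∀ p : P, (∑ i : Fin nb, ((b.coord i) (ι p)) • πF (b i)) = p := by
    intro p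
    have hb := b.sum_repr (ι p)
    calc ∑ i : Fin nb, ((b.coord i) (ι p)) • πF (b i)
        = πF (∑ i : Fin nb, b.repr (ι p) i • b i) := by
          rw [map_sum]; simp [Module.Basis.coord_apply, map_smul]
      _ = πF (ι p) := by rw [hb]
      _ = p := hπι p
  have happly : ∀ (ℓ : P →ₗ[A] W) (p : P),
      ℓ p = ∑ i : Fin nb, ((b.coord i) (ι p)) • ℓ (πF (b i)) := by
    intro ℓ p
    conv_lhs => rw [← hrepr p]
    rw [map_sum]
    simp [map_smul]
  -- K1 : θ₀ ∘ σ' = id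
  have hK1 : ∀ ℓ : P →ₗ[A] W, θ₀ (σ' ℓ) = ℓ := by
    intro ℓ
    apply LinearMap.ext
    intro p
    rw [hσ', map_sum]
    rw [LinearMap.coe_sum, Finset.sum_apply]
    have : ∀ i : Fin nb, θ₀ ((dd i) ⊗ₜ[𝕜] ℓ (πF (b i))) p
        = ((b.coord i) (ι p)) • ℓ (πF (b i)) := by
      intro i
      rw [hθ₀tmul, hdd, LinearMap.comp_apply]
    rw [Finset.sum_congr rfl fun i _ => this i]
    exact (happly ℓ p).symm
  -- K2 : reconstruction of d
  have hK2 : ∀ d : D, (∑ i : Fin nb, (eD d (πF (b i))) • dd i) = d := by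
    intro d
    apply heD
    apply LinearMap.ext
    intro p
    rw [map_sum]
    have h1 : ∀ i : Fin nb, eD ((eD d (πF (b i))) • dd i) p
        = eD d (πF (b i)) * ((b.coord i) (ι p)) := by
      intro i
      rw [map_smul, LinearMap.smul_apply, hdd, LinearMap.comp_apply, smul_eq_mul]
    rw [LinearMap.coe_sum, Finset.sum_apply]
    rw [Finset.sum_congr rfl fun i _ => h1 i]
    conv_rhs => rw [← hrepr p]
    rw [map_sum]
    refine Finset.sum_congr rfl fun i _ => ?_
    rw [map_smul, smul_eq_mul, mul_comm]
  -- K3 : x - σ' (θ₀ x) lies in the balanced relations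
  have hK3 : ∀ x : TensorProduct 𝕜 D W, x - σ' (θ₀ x) ∈ balancedRelComm 𝕜 A D W := by
    intro x
    induction x using TensorProduct.induction_on with
    | zero => simp
    | tmul d w =>
      have h1 : σ' (θ₀ (d ⊗ₜ[𝕜] w)) = ∑ i : Fin nb, (dd i) ⊗ₜ[𝕜] ((eD d (πF (b i))) • w) := by
        rw [hσ']
        refine Finset.sum_congr rfl fun i _ => ?_
        rw [hθ₀tmul]
      have h2 : d ⊗ₜ[𝕜] w = ∑ i : Fin nb, ((eD d (πF (b i))) • dd i) ⊗ₜ[𝕜] w := by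
        conv_lhs => rw [← hK2 d]
        rw [TensorProduct.sum_tmul]
      rw [h1, h2, ← Finset.sum_sub_distrib]
      refine Submodule.sum_mem _ fun i _ => ?_
      exact Submodule.subset_span ⟨eD d (πF (b i)), dd i, w, rfl⟩
    | add u v hu hv =>
      have h := add_mem hu hv
      have : u + v - σ' (θ₀ (u + v)) = (u - σ' (θ₀ u)) + (v - σ' (θ₀ v)) := by
        rw [map_add, map_add]; abel
      rw [this]
      exact h
  -- J₀ is inside ker θ₀
  have hJ0ker : balancedRelComm 𝕜 A D W ≤ LinearMap.ker θ₀ := by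
    rw [balancedRelComm, Submodule.span_le]
    rintro x ⟨a, d, w, rfl⟩
    simp only [SetLike.mem_coe, LinearMap.mem_ker, map_sub, sub_eq_zero]
    apply LinearMap.ext
    intro p
    rw [hθ₀tmul, hθ₀tmul, map_smul, LinearMap.smul_apply, smul_eq_mul,
      mul_smul, smul_comm]
  have hJ0J : (balancedRelComm 𝕜 A D W : Set (TensorProduct 𝕜 D W)) ⊆ (J : Set _) := by
    rw [hJ]
    letI := τT
    exact subset_closure
  -- continuity of evaluations of θ₀
  have hcont : ∀ q : P, @Continuous _ _ τT _ ⇑((ev q) ∘ₗ θ₀) := by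
    intro q
    refine St17.beta_continuous hτT hW ((ev q) ∘ₗ θ₀) ?_
    have hfun : (fun p : D × W => ((ev q) ∘ₗ θ₀) (p.1 ⊗ₜ[𝕜] p.2))
        = fun p : D × W => (eD p.1 q) • p.2 := by
      funext p
      show θ₀ (p.1 ⊗ₜ[𝕜] p.2) q = eD p.1 q • p.2
      rw [hθ₀tmul]
    rw [hfun]
    intro s hs
    have hs1 : VNBdd 𝕜 tD (Prod.fst '' s) :=
      St17.bddMap_of_cont (LinearMap.fst 𝕜 D W) (@continuous_fst D W tD _) s hs
    have hs2 : VNBdd 𝕜 (inferInstance : TopologicalSpace W) (Prod.snd '' s) :=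
      St17.bddMap_of_cont (LinearMap.snd 𝕜 D W) (@continuous_snd D W tD _) s hs
    have hA1 : VNBdd 𝕜 (inferInstance : TopologicalSpace A)
        ((fun d => eD d q) '' (Prod.fst '' s)) := by
      have h1 := (htD (Prod.fst '' s)).mp hs1 {q} (St17.vnbdd_singleton hP.1 q)
      refine St17.vnbdd_subset h1 ?_
      rintro _ ⟨d, hd, rfl⟩
      exact Set.mem_biUnion hd ⟨q, rfl, rfl⟩
    refine St17.vnbdd_subset (hWmod _ (St17.vnbdd_prod hA1 hs2)) ?_
    rintro _ ⟨⟨d, w⟩, hdw, rfl⟩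
    exact ⟨(eD d q, w), ⟨⟨d, ⟨(d, w), hdw, rfl⟩, rfl⟩, ⟨(d, w), hdw, rfl⟩⟩, rfl⟩
  -- J is inside ker θ₀
  have hker : J ≤ LinearMap.ker θ₀ := by
    intro x hx
    have hx' : x ∈ @closure _ τT (balancedRelComm 𝕜 A D W : Set _) := by
      rw [← hJ]; exact hx
    letI := τT
    have hKclosed : IsClosed (⋂ q : P, (⇑((ev q) ∘ₗ θ₀)) ⁻¹' {0}) :=
      isClosed_iInter fun q => (isClosed_singleton).preimage (hcont q)
    have hsub : (balancedRelComm 𝕜 A D W : Set (TensorProduct 𝕜 D W))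
        ⊆ ⋂ q : P, (⇑((ev q) ∘ₗ θ₀)) ⁻¹' {0} := by
      intro y hy
      have hy0 : θ₀ y = 0 := LinearMap.mem_ker.mp (hJ0ker hy)
      refine Set.mem_iInter.mpr fun q => ?_
      show θ₀ y q ∈ ({0} : Set W)
      rw [hy0]
      rfl
    have hxK := closure_minimal hsub hKclosed hx'
    rw [LinearMap.mem_ker]
    apply LinearMap.ext
    intro q
    have := Set.mem_iInter.mp hxK q
    exact this
  -- equality of the quotient map applied after mkQ
  refine ⟨J.liftQ θ₀ hker, ?_, ?_, ?_, ?_, ?_⟩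
  · -- formula on elementary tensors
    intro d w q
    rw [Submodule.mkQ_apply, Submodule.liftQ_apply, hθ₀tmul]
  · -- injectivity
    intro x y hxy
    obtain ⟨u, rfl⟩ := J.mkQ_surjective x
    obtain ⟨v, rfl⟩ := J.mkQ_surjective y
    rw [Submodule.mkQ_apply, Submodule.mkQ_apply] at hxy ⊢
    rw [Submodule.liftQ_apply, Submodule.liftQ_apply] at hxy
    rw [Submodule.Quotient.eq]
    have h0 : θ₀ (u - v) = 0 := by rw [map_sub, hxy, sub_self]
    have h1 := hK3 (u - v)
    rw [h0, map_zero, sub_zero] at h1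
    exact hJ0J h1
  · -- range characterization
    intro ℓ
    have hbddall : BddMap 𝕜 (inferInstance : TopologicalSpace P)
        (inferInstance : TopologicalSpace W) ⇑ℓ := by
      intro s hs
      have hAi : ∀ i : Fin nb, VNBdd 𝕜 (inferInstance : TopologicalSpace A)
          ((fun p => (b.coord i) (ι p)) '' s) := by
        intro i
        exact St17.bddMap_comp hι (hbdual i) s hs
      have hSi : ∀ i : Fin nb, VNBdd 𝕜 (inferInstance : TopologicalSpace W)
          ((fun r : A × W => r.1 • r.2) ''
            (((fun p => (b.coord i) (ι p)) '' s) ×ˢ ({ℓ (πF (b i))} : Set W))) := by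
        intro i
        exact hWmod _ (St17.vnbdd_prod (hAi i) (St17.vnbdd_singleton hW.1 _))
      refine St17.vnbdd_subset (St17.vnbdd_sum hW.1 Finset.univ _ fun i _ => hSi i) ?_
      rintro _ ⟨p, hp, rfl⟩
      rw [happly ℓ p]
      exact St17.sum_mem_setSum _ _ _ fun i _ =>
        ⟨((b.coord i) (ι p), ℓ (πF (b i))), ⟨⟨p, hp, rfl⟩, rfl⟩, rfl⟩
    constructor
    · intro _
      exact hbddall
    · intro _
      refine ⟨J.mkQ (σ' ℓ), ?_⟩
      rw [Submodule.mkQ_apply, Submodule.liftQ_apply]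
      exact hK1 ℓ
  · -- θ is bounded
    intro S hS B hB
    have hpt : ∀ q : P, VNBdd 𝕜 (inferInstance : TopologicalSpace W)
        ((fun x => (J.liftQ θ₀ hker) x q) '' S) := by
      intro q
      have hc : @Continuous _ _ (τT.coinduced J.mkQ) _ ⇑((ev q) ∘ₗ (J.liftQ θ₀ hker)) := by
        rw [continuous_coinduced_dom]
        have hfun : (⇑((ev q) ∘ₗ (J.liftQ θ₀ hker)) ∘ ⇑(J.mkQ)) = ⇑((ev q) ∘ₗ θ₀) := by
          funext x
          show (J.liftQ θ₀ hker) (J.mkQ x) q = θ₀ x q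
          rw [Submodule.mkQ_apply, Submodule.liftQ_apply]
        rw [hfun]
        exact hcont q
      exact St17.bddMap_of_cont ((ev q) ∘ₗ (J.liftQ θ₀ hker)) hc S hS
    have hAi : ∀ i : Fin nb, VNBdd 𝕜 (inferInstance : TopologicalSpace A)
        ((fun p => (b.coord i) (ι p)) '' B) := fun i => St17.bddMap_comp hι (hbdual i) B hB
    have hSi : ∀ i : Fin nb, VNBdd 𝕜 (inferInstance : TopologicalSpace W)
        ((fun r : A × W => r.1 • r.2) ''
          (((fun p => (b.coord i) (ι p)) '' B) ×ˢ
            ((fun x => (J.liftQ θ₀ hker) x (πF (b i))) '' S))) := by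
      intro i
      exact hWmod _ (St17.vnbdd_prod (hAi i) (hpt (πF (b i))))
    refine St17.vnbdd_subset (St17.vnbdd_sum hW.1 Finset.univ _ fun i _ => hSi i) ?_
    intro w hw
    simp only [Set.mem_iUnion] at hw
    obtain ⟨x, hx, p, hp, rfl⟩ := hw
    rw [happly ((J.liftQ θ₀ hker) x) p]
    exact St17.sum_mem_setSum _ _ _ fun i _ =>
      ⟨((b.coord i) (ι p), (J.liftQ θ₀ hker) x (πF (b i))),
        ⟨⟨p, hp, rfl⟩, ⟨x, hx, rfl⟩⟩, rfl⟩
  · -- θ⁻¹ is bounded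
    intro S hSfam
    have hEi : ∀ i : Fin nb, VNBdd 𝕜 (inferInstance : TopologicalSpace W)
        ((fun x => (J.liftQ θ₀ hker) x (πF (b i))) '' S) := by
      intro i
      have h1 := hSfam {πF (b i)} (St17.vnbdd_singleton hP.1 _)
      refine St17.vnbdd_subset h1 ?_
      rintro _ ⟨x, hx, rfl⟩
      exact Set.mem_biUnion hx ⟨πF (b i), rfl, rfl⟩
    have hddB : ∀ i : Fin nb, VNBdd 𝕜 tD ({dd i} : Set D) := by
      intro i
      refine (htD _).mpr fun B hB => ?_
      have heq : (⋃ d ∈ ({dd i} : Set D), ⇑(eD d) '' B) = ⇑(eD (dd i)) '' B := by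
        simp
      rw [heq, hdd, LinearMap.coe_comp]
      exact St17.bddMap_comp hι (hbdual i) B hB
    have hTi : ∀ i : Fin nb, VNBdd 𝕜 τT
        ((fun p : D × W => p.1 ⊗ₜ[𝕜] p.2) ''
          (({dd i} : Set D) ×ˢ ((fun x => (J.liftQ θ₀ hker) x (πF (b i))) '' S))) := by
      intro i
      exact hτT.2.1 _ (St17.vnbdd_prod (hddB i) (hEi i))
    have hTsum := St17.vnbdd_sum hτT.1.1 Finset.univ _ fun i _ => hTi i
    have hmkQ : BddMap 𝕜 τT (τT.coinduced ⇑(J.mkQ)) ⇑(J.mkQ) :=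
      St17.bddMap_of_cont J.mkQ continuous_coinduced_rng
    refine St17.vnbdd_subset (hmkQ _ hTsum) ?_
    intro x hx
    obtain ⟨u, rfl⟩ := J.mkQ_surjective x
    refine ⟨σ' (θ₀ u), ?_, ?_⟩
    · rw [hσ']
      refine St17.sum_mem_setSum _ _ _ fun i _ =>
        ⟨(dd i, θ₀ u (πF (b i))), ⟨rfl, ⟨J.mkQ u, hx, ?_⟩⟩, rfl⟩
      show (J.liftQ θ₀ hker) (J.mkQ u) (πF (b i)) = θ₀ u (πF (b i))
      rw [Submodule.mkQ_apply, Submodule.liftQ_apply]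
    · rw [Submodule.mkQ_apply, Submodule.mkQ_apply, Submodule.Quotient.eq]
      have h1 := hK3 u
      have h2 : -(u - σ' (θ₀ u)) ∈ J := neg_mem (hJ0J h1)
      rwa [neg_sub] at h2
end
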